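/- arXiv:2309.10416 — 4 statements merged into one kernel-verified Lean document; each statement's English description precedes it below -/
import Mathlib

section
/- For the DCHSBM, define B ∈ ℝ^{K×K} by B_{rs} = Σ_{m=2}^M m Σ_{k_3,…,k_m∈[K]} (∏_{l=3}^m n_{k_l}) Φ(r,s,k_3,…,k_m). Then B is symmetric and the expected weighted adjacency matrix satisfies P_{ij} = θ_i θ_j B_{g_i g_j} for all i, j ∈ [n]; equivalently P = diag(θ) Z B Z^T diag(θ), where Z ∈ {0,1}^{n×K} is the membership matrix with Z_{ik} = 1 iff g_i = k. In particular rank(P) ≤ K. -/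
open MeasureTheory ProbabilityTheory Finset Matrix

noncomputable section

/-- A hyperedge on `n` nodes with cardinality between `2` and `M`:
a multiset of nodes encoded together with its cardinality. -/
def Hedge (n M : ℕ) : Type :=
  {p : (m : Fin (M + 1)) × Sym (Fin n) (m : ℕ) // 2 ≤ (p.1 : ℕ)}

instance (n M : ℕ) : Fintype (Hedge n M) := by unfold Hedge; infer_instance

/-- `a_{ei}`: the multiplicity of node `i` in the hyperedge `e`. -/
def Hedge.mult {n M : ℕ} (e : Hedge n M) (i : Fin n) : ℕ :=
  Multiset.count i (e.1.2 : Multiset (Fin n))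

/-- `|e|`: the cardinality of the hyperedge `e`. -/
def Hedge.size {n M : ℕ} (e : Hedge n M) : ℕ := (e.1.1 : ℕ)

/-- `b_e = |e|! / ∏_i a_{ei}!`: the number of distinct orderings of the nodes of `e`. -/
def Hedge.bcoef {n M : ℕ} (e : Hedge n M) : ℕ :=
  (Nat.factorial e.size) / ∏ i, Nat.factorial (e.mult i)

/-- `g_e`: the multiset of community labels of the nodes of `e` (with multiplicity). -/
def Hedge.labels {n M K : ℕ} (g : Fin n → Fin K) (e : Hedge n M) : Multiset (Fin K) :=
  Multiset.map g (e.1.2 : Multiset (Fin n))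

/-- `ℙ(h_e = 1) = b_e (∏_i θ_i^{a_{ei}}) Φ(g_e)`. -/
def edgeProb {n M K : ℕ} (g : Fin n → Fin K) (θ : Fin n → ℝ)
    (Φ : Multiset (Fin K) → ℝ) (e : Hedge n M) : ℝ :=
  (e.bcoef : ℝ) * (∏ i, θ i ^ e.mult i) * Φ (Hedge.labels g e)

/-- The weighted adjacency matrix
`A_{ij} = Σ_{e∈E} a_{ei}(a_{ej} − δ_{ij})/(|e| − 1) · h_e`. -/
def adjMatrix {n M : ℕ} {Ω : Type*} (h : Hedge n M → Ω → ℝ) (ω : Ω) :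
    Matrix (Fin n) (Fin n) ℝ := fun i j =>
  ∑ e : Hedge n M,
    (e.mult i : ℝ) * ((e.mult j : ℝ) - if i = j then 1 else 0) / ((e.size : ℝ) - 1) * h e ω

/-- The population adjacency matrix `P = 𝔼[A]`. -/
def expMatrix {n M : ℕ} {Ω : Type*} [MeasurableSpace Ω] (μ : Measure Ω)
    (h : Hedge n M → Ω → ℝ) : Matrix (Fin n) (Fin n) ℝ := fun i j =>
  ∫ ω, adjMatrix h ω i j ∂μ

/-- The degree-corrected hypergraph stochastic block model: `{h_e}` are jointly independent
Bernoulli variables with `ℙ(h_e = 1) = b_e (∏_i θ_i^{a_{ei}}) Φ(g_e) ∈ [0,1]`. -/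
structure IsDCHSBM {n M K : ℕ} {Ω : Type*} [MeasurableSpace Ω] (μ : Measure Ω)
    (g : Fin n → Fin K) (θ : Fin n → ℝ) (Φ : Multiset (Fin K) → ℝ)
    (h : Hedge n M → Ω → ℝ) : Prop where
  prob : IsProbabilityMeasure μ
  theta_pos : ∀ i, 0 < θ i
  phi_nonneg : ∀ s, 0 ≤ Φ s
  meas : ∀ e, Measurable (h e)
  indep : iIndepFun h μ
  bern : ∀ e ω, h e ω = 0 ∨ h e ω = 1
  prob_le_one : ∀ e : Hedge n M, edgeProb g θ Φ e ≤ 1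
  h_eq_one : ∀ e : Hedge n M, μ {ω | h e ω = 1} = ENNReal.ofReal (edgeProb g θ Φ e)

/-- `d = max{n · max_{ij} P_{ij}, c₀ log n}`. -/
def dOf {n : ℕ} (c₀ : ℝ) (P : Matrix (Fin n) (Fin n) ℝ) : ℝ :=
  max ((n : ℝ) * ⨆ i, ⨆ j, P i j) (c₀ * Real.log n)

/-- The spectral norm of a matrix (operator norm between Euclidean spaces). -/
def specNorm {m n : ℕ} (W : Matrix (Fin m) (Fin n) ℝ) : ℝ :=
  ‖(Matrix.toEuclideanLin W).toContinuousLinearMap‖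

/-- The Euclidean norm of the `i`-th row of a matrix. -/
def rowNorm {n K : ℕ} (X : Matrix (Fin n) (Fin K) ℝ) (i : Fin n) : ℝ :=
  Real.sqrt (∑ k, X i k ^ 2)

/-- The two-to-infinity norm: the maximum Euclidean row norm. -/
def norm2inf {n K : ℕ} (X : Matrix (Fin n) (Fin K) ℝ) : ℝ := ⨆ i, rowNorm X i

/-- Eigenvalues `lam` (ordered by decreasing absolute value) together with
orthonormal eigenvectors `u` of a symmetric matrix. -/
structure EigenData {n : ℕ} (A : Matrix (Fin n) (Fin n) ℝ) (lam : Fin n → ℝ)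
    (u : Fin n → Fin n → ℝ) : Prop where
  eig : ∀ k, A.mulVec (u k) = lam k • u k
  ortho : ∀ k l, u k ⬝ᵥ u l = if k = l then (1 : ℝ) else 0
  sorted : ∀ k l : Fin n, k ≤ l → |lam l| ≤ |lam k|

/-- The `n × K` matrix whose columns are the `K` leading eigenvectors. -/
def leadingCols {n K : ℕ} (hK : K ≤ n) (u : Fin n → Fin n → ℝ) :
    Matrix (Fin n) (Fin K) ℝ := fun i k => u (Fin.castLE hK k) i

/-- `n_k`: the size of the `k`-th community. -/
def commSize {n K : ℕ} (g : Fin n → Fin K) (k : Fin K) : ℕ :=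
  (Finset.univ.filter (fun i => g i = k)).card

/-- `φ_k = sqrt(Σ_j θ_j² 1{g_j = k})`. -/
def phiOf {n K : ℕ} (g : Fin n → Fin K) (θ : Fin n → ℝ) (k : Fin K) : ℝ :=
  Real.sqrt (∑ j, if g j = k then θ j ^ 2 else 0)

/-- `θ̃_i = θ_i / φ_{g_i}`. -/
def thetaTil {n K : ℕ} (g : Fin n → Fin K) (θ : Fin n → ℝ) (i : Fin n) : ℝ :=
  θ i / phiOf g θ (g i)


/-- `B_{rs} = Σ_{m=2}^M m Σ_{k₃,…,k_m} (∏_l n_{k_l}) Φ(r,s,k₃,…,k_m)`. -/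
def Bmat {K : ℕ} (M : ℕ) (nsz : Fin K → ℕ) (Φ : Multiset (Fin K) → ℝ) :
    Matrix (Fin K) (Fin K) ℝ := fun r s =>
  ∑ m ∈ Finset.Icc 2 M, (m : ℝ) *
    ∑ v : Fin (m - 2) → Fin K,
      (∏ l, (nsz (v l) : ℝ)) * Φ (r ::ₘ s ::ₘ Multiset.map v Finset.univ.val)

/-- The membership matrix `Z` with `Z_{ik} = 1` iff `g_i = k`. -/
def Zmat {n K : ℕ} (g : Fin n → Fin K) : Matrix (Fin n) (Fin K) ℝ :=
  fun i k => if g i = k then 1 else 0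

namespace DCH

variable {α γ : Type*} [Fintype α] [DecidableEq α] {K : ℕ}

/-- map over `Fin.cons` -/
lemma map_univ_cons {m : ℕ} (a : α) (f : Fin m → α) :
    Multiset.map (Fin.cons a f) (univ : Finset (Fin (m + 1))).val
      = a ::ₘ Multiset.map f (univ : Finset (Fin m)).val := by
  rw [Fin.univ_succ, Finset.cons_val, Multiset.map_cons, Fin.cons_zero, Finset.map_val,
    Multiset.map_map]
  simp [Function.comp_def]

lemma count_map_univ {m : ℕ} (f : Fin m → α) (x : α) :
    Multiset.count x (Multiset.map f (univ : Finset (Fin m)).val)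
      = (univ.filter (fun p => f p = x)).card := by
  rw [Multiset.count_map]
  simp [Finset.card_filter, Finset.filter, eq_comm]

lemma sum_pi_succ {M : Type*} [AddCommMonoid M] {m : ℕ} (F : (Fin (m + 1) → α) → M) :
    ∑ f : Fin (m + 1) → α, F f = ∑ a : α, ∑ f' : Fin m → α, F (Fin.cons a f') := by
  rw [← (Fin.consEquiv (fun _ : Fin (m + 1) => α)).sum_comp F, Fintype.sum_prod_type]
  rfl

lemma prod_fact_erase (s : Multiset α) (a : α) (ha : a ∈ s) :
    ∏ x : α, (s.count x).factorial
      = s.count a * ∏ x : α, ((s.erase a).count x).factorial := by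
  obtain ⟨k, hk⟩ : ∃ k, s.count a = k + 1 :=
    ⟨s.count a - 1, (Nat.succ_pred_eq_of_pos (Multiset.count_pos.mpr ha)).symm⟩
  calc ∏ x : α, (s.count x).factorial
      = (s.count a).factorial * ∏ x ∈ univ.erase a, (s.count x).factorial :=
        (Finset.mul_prod_erase _ _ (mem_univ a)).symm
    _ = (s.count a).factorial * ∏ x ∈ univ.erase a, ((s.erase a).count x).factorial := by
        refine congrArg _ (Finset.prod_congr rfl fun x hx => ?_)
        rw [Multiset.count_erase_of_ne (Finset.ne_of_mem_erase hx)]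
    _ = s.count a * (((s.erase a).count a).factorial
          * ∏ x ∈ univ.erase a, ((s.erase a).count x).factorial) := by
        rw [Multiset.count_erase_self, hk, Nat.add_sub_cancel, Nat.factorial_succ]
        ring
    _ = s.count a * ∏ x : α, ((s.erase a).count x).factorial := by
        rw [Finset.mul_prod_erase univ (fun x => (Multiset.count x (s.erase a)).factorial)
          (mem_univ a)]

lemma fiber_card : ∀ (m : ℕ) (s : Multiset α), Multiset.card s = m →
    (univ.filter (fun f : Fin m → α => Multiset.map f univ.val = s)).card
      * ∏ x : α, (s.count x).factorial = m.factorial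
  | 0, s, hs => by
    rw [Multiset.card_eq_zero] at hs
    subst hs
    have h0 : (univ : Finset (Fin 0)).val = 0 := rfl
    simp [h0]
  | m + 1, s, hs => by
    have key : (univ.filter (fun f : Fin (m + 1) → α => Multiset.map f univ.val = s)).card
        = ∑ a ∈ s.toFinset,
            (univ.filter (fun f : Fin m → α => Multiset.map f univ.val = s.erase a)).card := by
      rw [Finset.card_filter]
      rw [sum_pi_succ (fun f => if Multiset.map f univ.val = s then 1 else 0)]
      have : ∀ a : α, (∑ f' : Fin m → α,
          if Multiset.map (Fin.cons a f') univ.val = s then 1 else 0)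
          = if a ∈ s then
              (univ.filter (fun f : Fin m → α => Multiset.map f univ.val = s.erase a)).card
            else 0 := by
        intro a
        by_cases ha : a ∈ s
        · simp only [ha, if_true, Finset.card_filter]
          refine Finset.sum_congr rfl fun f' _ => ?_
          rw [map_univ_cons]
          congr 1
          simp only [eq_iff_iff]
          constructor
          · intro hc
            rw [← hc, Multiset.erase_cons_head]
          · intro hc
            rw [hc, Multiset.cons_erase ha]
        · simp only [ha, if_false]
          refine Finset.sum_eq_zero fun f' _ => ?_
          rw [map_univ_cons, if_neg]
          intro hc
          exact ha (hc ▸ Multiset.mem_cons_self a _)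
      rw [Finset.sum_congr rfl fun a _ => this a, ← Finset.sum_filter]
      congr 1
      ext a
      simp
    rw [key, Finset.sum_mul]
    have step : ∀ a ∈ s.toFinset,
        (univ.filter (fun f : Fin m → α => Multiset.map f univ.val = s.erase a)).card
          * ∏ x : α, (s.count x).factorial = s.count a * m.factorial := by
      intro a ha
      rw [Multiset.mem_toFinset] at ha
      rw [prod_fact_erase s a ha, ← mul_assoc, mul_comm _ (s.count a), mul_assoc,
        fiber_card m (s.erase a) (by rw [Multiset.card_erase_of_mem ha, hs]; rfl)]
    rw [Finset.sum_congr rfl step, ← Finset.sum_mul, Multiset.toFinset_sum_count_eq, hs,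
      Nat.factorial_succ]


lemma sym_sum (m : ℕ) (F : Multiset α → ℝ) :
    ∑ s : Sym α m,
      ((univ.filter (fun f : Fin m → α => Multiset.map f univ.val = ↑s)).card : ℝ) * F ↑s
      = ∑ f : Fin m → α, F (Multiset.map f univ.val) := by
  classical
  rw [← Finset.sum_fiberwise (κ := Sym α m) univ
    (fun f : Fin m → α => (⟨Multiset.map f univ.val, by simp⟩ : Sym α m))
    (fun f => F (Multiset.map f univ.val))]
  refine Finset.sum_congr rfl fun s _ => ?_
  have hset : (univ.filter (fun f : Fin m → α =>
      (⟨Multiset.map f univ.val, by simp⟩ : Sym α m) = s))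
      = univ.filter (fun f : Fin m → α => Multiset.map f univ.val = ↑s) := by
    refine Finset.filter_congr fun f _ => ?_
    constructor
    · intro hc; rw [← hc]; rfl
    · intro hc; exact Subtype.ext hc
  refine Eq.trans ?_ (Finset.sum_congr (s₁ := univ.filter (fun f : Fin m → α => Multiset.map f univ.val = ↑s))
    (by ext f; simp only [Finset.mem_filter, Finset.mem_univ, true_and]; exact ⟨fun hc => Subtype.ext hc,
      fun hc => congrArg (fun t : Sym α m => (t : Multiset α)) hc⟩) fun _ _ => rfl)
  have hterm : ∀ f ∈ univ.filter (fun f : Fin m → α => Multiset.map f univ.val = ↑s),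
      F (Multiset.map f univ.val) = F ↑s := fun f hf => by rw [(Finset.mem_filter.mp hf).2]
  rw [Finset.sum_congr rfl hterm, Finset.sum_const, nsmul_eq_mul]

lemma prod_pow_count (θ : α → ℝ) {m : ℕ} (f : Fin m → α) :
    ∏ x : α, θ x ^ Multiset.count x (Multiset.map f univ.val) = ∏ l, θ (f l) := by
  rw [← Finset.prod_fiberwise univ f (fun l => θ (f l))]
  refine Finset.prod_congr rfl fun x _ => ?_
  rw [count_map_univ]
  exact ((Finset.prod_congr rfl fun l hl => by
    rw [(Finset.mem_filter.mp hl).2]).trans (Finset.prod_const _)).symm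

lemma pair_count {m : ℕ} (f : Fin m → α) (i j : α) :
    ∑ p : Fin m, ∑ q : Fin m, (if p ≠ q ∧ f p = i ∧ f q = j then (1 : ℝ) else 0)
      = ((univ.filter (fun p => f p = i)).card : ℝ)
          * ((univ.filter (fun p => f p = j)).card : ℝ)
        - (if i = j then ((univ.filter (fun p => f p = i)).card : ℝ) else 0) := by
  have hcard : ∀ x : α, ((univ.filter (fun p => f p = x)).card : ℝ)
      = ∑ p : Fin m, if f p = x then (1 : ℝ) else 0 := by
    intro x
    rw [Finset.card_filter]
    push_cast
    rfl
  have key : ∀ p q : Fin m, (if p ≠ q ∧ f p = i ∧ f q = j then (1 : ℝ) else 0)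
      = (if f p = i then (1 : ℝ) else 0) * (if f q = j then (1 : ℝ) else 0)
        - (if p = q then (if f p = i ∧ f p = j then (1 : ℝ) else 0) else 0) := by
    intro p q
    by_cases hpq : p = q <;> by_cases h1 : f p = i <;> by_cases h2 : f q = j <;>
      simp [hpq, h1, h2] <;> simp_all
  simp only [key]
  rw [Finset.sum_congr rfl fun p _ => Finset.sum_sub_distrib _ _, Finset.sum_sub_distrib]
  congr 1
  · rw [← Finset.sum_mul_sum, hcard, hcard]
  · rw [Finset.sum_congr rfl fun p (_ : p ∈ univ) => Finset.sum_ite_eq univ p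
      (fun _ => if f p = i ∧ f p = j then (1 : ℝ) else 0)]
    simp only [Finset.mem_univ, if_true]
    by_cases hij : i = j
    · subst hij
      rw [if_pos rfl, hcard]
      refine Finset.sum_congr rfl fun p _ => ?_
      by_cases hp : f p = i <;> simp [hp]
    · rw [if_neg hij]
      refine Finset.sum_eq_zero fun p _ => if_neg ?_
      rintro ⟨h1, h2⟩
      exact hij (h1.symm.trans h2)

lemma exists_perm {m' : ℕ} (p q : Fin (m' + 2)) (hpq : p ≠ q) :
    ∃ σ : Equiv.Perm (Fin (m' + 2)), σ 0 = p ∧ σ 1 = q := by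
  set τ := Equiv.swap (0 : Fin (m' + 2)) p with hτ
  have h01 : (0 : Fin (m' + 2)) ≠ 1 := by simp [Fin.ext_iff]
  have hτq : τ q ≠ 0 := by
    intro hc
    apply hpq
    have := congrArg τ hc
    rw [Equiv.swap_apply_self, Equiv.swap_apply_left] at this
    exact this.symm
  refine ⟨(Equiv.swap (1 : Fin (m' + 2)) (τ q)).trans τ, ?_, ?_⟩
  · simp only [Equiv.trans_apply]
    rw [Equiv.swap_apply_of_ne_of_ne h01 (Ne.symm hτq), Equiv.swap_apply_left]
  · simp only [Equiv.trans_apply]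
    rw [Equiv.swap_apply_left, Equiv.swap_apply_self]


lemma sum_ite_pair {m' : ℕ} (p q : Fin (m' + 2)) (hpq : p ≠ q) (i j : α)
    (W : Multiset α → ℝ) :
    ∑ f : Fin (m' + 2) → α, (if f p = i ∧ f q = j then W (Multiset.map f univ.val) else 0)
      = ∑ f' : Fin m' → α, W (i ::ₘ j ::ₘ Multiset.map f' univ.val) := by
  obtain ⟨σ, hσ0, hσ1⟩ := exists_perm p q hpq
  have hsymm0 : σ.symm p = 0 := by rw [← hσ0, Equiv.symm_apply_apply]
  have hsymm1 : σ.symm q = 1 := by rw [← hσ1, Equiv.symm_apply_apply]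
  have hmap : ∀ f : Fin (m' + 2) → α,
      Multiset.map (f ∘ ⇑σ.symm) (univ : Finset (Fin (m' + 2))).val
        = Multiset.map f (univ : Finset (Fin (m' + 2))).val := by
    intro f
    rw [← Multiset.map_map]
    congr 1
    have := congrArg Finset.val (Finset.map_univ_equiv σ.symm)
    rw [Finset.map_val] at this
    simpa using this
  have hre : ∑ f : Fin (m' + 2) → α,
        (if f p = i ∧ f q = j then W (Multiset.map f univ.val) else 0)
      = ∑ f : Fin (m' + 2) → α,
        (if f 0 = i ∧ f 1 = j then W (Multiset.map f univ.val) else 0) := by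
    rw [← Equiv.sum_comp (Equiv.arrowCongr σ (Equiv.refl α))
      (fun f : Fin (m' + 2) → α =>
        if f p = i ∧ f q = j then W (Multiset.map f univ.val) else 0)]
    refine Finset.sum_congr rfl fun f _ => ?_
    have happ : (Equiv.arrowCongr σ (Equiv.refl α)) f = f ∘ ⇑σ.symm := rfl
    rw [happ]
    simp only [Function.comp_apply, hsymm0, hsymm1]
    exact if_congr Iff.rfl (congrArg W (hmap f)) rfl
  rw [hre]
  have h10 : (1 : Fin (m' + 2)) = Fin.succ 0 := by
    rw [Fin.ext_iff]
    simp
  rw [sum_pi_succ (fun f : Fin (m' + 2) → α =>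
    if f 0 = i ∧ f 1 = j then W (Multiset.map f univ.val) else 0)]
  simp only [h10, Fin.cons_zero, Fin.cons_succ, map_univ_cons, ite_and]
  rw [Finset.sum_comm]
  rw [Finset.sum_congr rfl fun f1 (_ : f1 ∈ univ) => Finset.sum_ite_eq' univ i
    (fun a => if f1 0 = j then W (a ::ₘ Multiset.map f1 univ.val) else 0)]
  simp only [Finset.mem_univ, if_true]
  rw [sum_pi_succ (fun f1 : Fin (m' + 1) → α =>
    if f1 0 = j then W (i ::ₘ Multiset.map f1 univ.val) else 0)]
  simp only [Fin.cons_zero, map_univ_cons]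
  rw [Finset.sum_comm]
  rw [Finset.sum_congr rfl fun f' (_ : f' ∈ univ) => Finset.sum_ite_eq' univ j
    (fun b => W (i ::ₘ b ::ₘ Multiset.map f' univ.val))]
  simp only [Finset.mem_univ, if_true]


lemma fun_sum_eq {β : Type*} (g : α → β) (θ : α → ℝ) (Φ : Multiset β → ℝ)
    (m' : ℕ) (i j : α) :
    ∑ f : Fin (m' + 2) → α,
      (Multiset.count i (Multiset.map f univ.val) : ℝ)
          * ((Multiset.count j (Multiset.map f univ.val) : ℝ)
              - if i = j then (1 : ℝ) else 0)
          / ((m' + 2 : ℝ) - 1)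
        * ((∏ x, θ x ^ Multiset.count x (Multiset.map f univ.val))
            * Φ (Multiset.map g (Multiset.map f univ.val)))
      = (m' + 2 : ℝ) * ∑ f' : Fin m' → α,
          θ i * θ j * ((∏ l, θ (f' l))
            * Φ (g i ::ₘ g j ::ₘ Multiset.map (g ∘ f') univ.val)) := by
  classical
  set W : Multiset α → ℝ := fun t => (Multiset.map θ t).prod * Φ (Multiset.map g t) with hW
  have hprodW : ∀ {m : ℕ} (f : Fin m → α),
      (Multiset.map θ (Multiset.map f univ.val)).prod = ∏ l, θ (f l) := by
    intro m f
    rw [Multiset.map_map, Finset.prod_eq_multiset_prod]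
    rfl
  have hWf : ∀ f : Fin (m' + 2) → α,
      (∏ x, θ x ^ Multiset.count x (Multiset.map f univ.val))
          * Φ (Multiset.map g (Multiset.map f univ.val)) = W (Multiset.map f univ.val) := by
    intro f
    show _ = (Multiset.map θ (Multiset.map f univ.val)).prod
        * Φ (Multiset.map g (Multiset.map f univ.val))
    rw [hprodW f, prod_pow_count]
  have hm1 : ((m' + 2 : ℝ) - 1) = (m' + 1 : ℝ) := by ring
  have hterm : ∀ f : Fin (m' + 2) → α,
      (Multiset.count i (Multiset.map f univ.val) : ℝ)
          * ((Multiset.count j (Multiset.map f univ.val) : ℝ)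
              - if i = j then (1 : ℝ) else 0)
          / ((m' + 2 : ℝ) - 1)
        * ((∏ x, θ x ^ Multiset.count x (Multiset.map f univ.val))
            * Φ (Multiset.map g (Multiset.map f univ.val)))
      = (∑ p : Fin (m' + 2), ∑ q : Fin (m' + 2),
          if p ≠ q ∧ f p = i ∧ f q = j then (1 : ℝ) else 0)
          * W (Multiset.map f univ.val) / (m' + 1 : ℝ) := by
    intro f
    rw [hWf f, hm1, count_map_univ, count_map_univ, pair_count f i j]
    have hd : ((univ.filter (fun p => f p = i)).card : ℝ)
        * (((univ.filter (fun p => f p = j)).card : ℝ) - if i = j then (1 : ℝ) else 0)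
        = ((univ.filter (fun p => f p = i)).card : ℝ)
            * ((univ.filter (fun p => f p = j)).card : ℝ)
          - (if i = j then ((univ.filter (fun p => f p = i)).card : ℝ) else 0) := by
      by_cases hij : i = j <;> simp [hij] <;> ring
    rw [hd]
    ring
  rw [Finset.sum_congr rfl fun f (_ : f ∈ univ) => hterm f]
  have hC : ∀ p q : Fin (m' + 2),
      ∑ f : Fin (m' + 2) → α,
        (if p ≠ q ∧ f p = i ∧ f q = j then (1 : ℝ) else 0) * W (Multiset.map f univ.val)
      = if p ≠ q then ∑ f' : Fin m' → α, W (i ::ₘ j ::ₘ Multiset.map f' univ.val) else 0 := by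
    intro p q
    by_cases hpq : p = q
    · simp [hpq]
    · rw [if_pos hpq]
      rw [← sum_ite_pair p q hpq i j W]
      refine Finset.sum_congr rfl fun f _ => ?_
      by_cases hc : f p = i ∧ f q = j <;> simp [hc, hpq]
  have swap : ∑ f : Fin (m' + 2) → α,
      (∑ p : Fin (m' + 2), ∑ q : Fin (m' + 2),
        if p ≠ q ∧ f p = i ∧ f q = j then (1 : ℝ) else 0)
        * W (Multiset.map f univ.val) / (m' + 1 : ℝ)
      = (∑ p : Fin (m' + 2), ∑ q : Fin (m' + 2), ∑ f : Fin (m' + 2) → α,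
          (if p ≠ q ∧ f p = i ∧ f q = j then (1 : ℝ) else 0) * W (Multiset.map f univ.val))
          / (m' + 1 : ℝ) := by
    rw [← Finset.sum_div]
    congr 1
    rw [Finset.sum_congr rfl (fun f (_ : f ∈ univ) =>
      show (∑ p : Fin (m' + 2), ∑ q : Fin (m' + 2),
          if p ≠ q ∧ f p = i ∧ f q = j then (1 : ℝ) else 0) * W (Multiset.map f univ.val)
        = ∑ p : Fin (m' + 2), ∑ q : Fin (m' + 2),
            (if p ≠ q ∧ f p = i ∧ f q = j then (1 : ℝ) else 0) * W (Multiset.map f univ.val)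
        from by
          rw [Finset.sum_mul]
          exact Finset.sum_congr rfl fun p _ => Finset.sum_mul _ _ _)]
    rw [Finset.sum_comm]
    exact Finset.sum_congr rfl fun p _ => Finset.sum_comm
  rw [swap]
  set C : ℝ := ∑ f' : Fin m' → α, W (i ::ₘ j ::ₘ Multiset.map f' univ.val) with hCdef
  have hsum2 : ∑ p : Fin (m' + 2), ∑ q : Fin (m' + 2), ∑ f : Fin (m' + 2) → α,
      (if p ≠ q ∧ f p = i ∧ f q = j then (1 : ℝ) else 0) * W (Multiset.map f univ.val)
      = (m' + 2 : ℝ) * ((m' + 1 : ℝ) * C) := by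
    rw [Finset.sum_congr rfl fun p (_ : p ∈ univ) => Finset.sum_congr rfl
      fun q (_ : q ∈ univ) => hC p q]
    have hin : ∀ p : Fin (m' + 2),
        ∑ q : Fin (m' + 2), (if p ≠ q then C else 0) = (m' + 1 : ℝ) * C := by
      intro p
      have hq : ∀ q : Fin (m' + 2), (if p ≠ q then C else 0)
          = C - (if p = q then C else 0) := by
        intro q
        by_cases hpq : p = q <;> simp [hpq]
      rw [Finset.sum_congr rfl fun q _ => hq q, Finset.sum_sub_distrib,
        Finset.sum_const, Finset.sum_ite_eq univ p (fun _ => C)]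
      simp only [Finset.mem_univ, if_true, Finset.card_univ, Fintype.card_fin,
        nsmul_eq_mul]
      push_cast
      ring
    rw [Finset.sum_congr rfl fun p (_ : p ∈ univ) => hin p, Finset.sum_const,
      Finset.card_univ, Fintype.card_fin, nsmul_eq_mul]
    push_cast
    ring
  have hCval : C = ∑ f' : Fin m' → α,
      θ i * θ j * ((∏ l, θ (f' l)) * Φ (g i ::ₘ g j ::ₘ Multiset.map (g ∘ f') univ.val)) := by
    rw [hCdef]
    refine Finset.sum_congr rfl fun f' _ => ?_
    rw [hW]
    simp only [Multiset.map_cons, Multiset.prod_cons]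
    rw [hprodW f', ← Multiset.map_map]
    ring
  have hne : (m' + 1 : ℝ) ≠ 0 := by positivity
  rw [hsum2, ← hCval]
  field_simp


lemma label_group {β : Type*} [Fintype β] [DecidableEq β] (g : α → β) (θ : α → ℝ)
    (c : β → ℝ) (hc : ∀ k, ∑ x ∈ univ.filter (fun x => g x = k), θ x = c k)
    (m' : ℕ) (Ψ : Multiset β → ℝ) :
    ∑ f' : Fin m' → α, (∏ l, θ (f' l)) * Ψ (Multiset.map (g ∘ f') univ.val)
      = ∑ v : Fin m' → β, (∏ l, c (v l)) * Ψ (Multiset.map v univ.val) := by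
  classical
  rw [← Finset.sum_fiberwise (κ := Fin m' → β) univ (fun f' : Fin m' → α => g ∘ f')
    (fun f' => (∏ l, θ (f' l)) * Ψ (Multiset.map (g ∘ f') univ.val))]
  refine Finset.sum_congr rfl fun v _ => ?_
  have hfib : univ.filter (fun f' : Fin m' → α => g ∘ f' = v)
      = Fintype.piFinset (fun l => univ.filter (fun x => g x = v l)) := by
    ext f'
    simp [funext_iff, Function.comp]
  have hcongr : ∀ f' ∈ univ.filter (fun f' : Fin m' → α => g ∘ f' = v),
      (∏ l, θ (f' l)) * Ψ (Multiset.map (g ∘ f') univ.val)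
        = (∏ l, θ (f' l)) * Ψ (Multiset.map v univ.val) := by
    intro f' hf'
    rw [(Finset.mem_filter.mp hf').2]
  rw [Finset.sum_congr rfl hcongr, ← Finset.sum_mul, hfib, ← Finset.prod_univ_sum]
  congr 1
  exact Finset.prod_congr rfl fun l _ => hc (v l)


lemma bcoef_eq_card {m : ℕ} (s : Multiset α) (hs : Multiset.card s = m) :
    m.factorial / ∏ x : α, (s.count x).factorial
      = (univ.filter (fun f : Fin m → α => Multiset.map f univ.val = s)).card := by
  have hpos : 0 < ∏ x : α, (s.count x).factorial :=
    Finset.prod_pos fun x _ => Nat.factorial_pos _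
  exact Nat.div_eq_of_eq_mul_left hpos (fiber_card m s hs).symm

end DCH

theorem stmt_0 {n M K : ℕ} {Ω : Type*} [MeasurableSpace Ω] (μ : Measure Ω)
    (g : Fin n → Fin K) (θ : Fin n → ℝ) (Φ : Multiset (Fin K) → ℝ)
    (h : Hedge n M → Ω → ℝ) (hn : 1 ≤ n) (hK : 1 ≤ K) (hM : 2 ≤ M)
    (hmodel : IsDCHSBM μ g θ Φ h)
    (hnorm : ∀ k, ∑ i, (if g i = k then θ i else 0) = (commSize g k : ℝ)) :
    (Bmat M (fun k => commSize g k) Φ).IsSymm ∧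
    (∀ i j, expMatrix μ h i j = θ i * θ j * Bmat M (fun k => commSize g k) Φ (g i) (g j)) ∧
    expMatrix μ h =
      Matrix.diagonal θ * (Zmat g * Bmat M (fun k => commSize g k) Φ * (Zmat g)ᵀ) *
        Matrix.diagonal θ ∧
    (expMatrix μ h).rank ≤ K := by
  classical
  haveI := hmodel.prob
  -- nonnegativity of edge probabilities
  have hedge_nonneg : ∀ e : Hedge n M, 0 ≤ edgeProb g θ Φ e := by
    intro e
    have h1 : (0 : ℝ) ≤ (e.bcoef : ℝ) := Nat.cast_nonneg _
    have h2 : (0 : ℝ) ≤ ∏ x, θ x ^ e.mult x :=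
      Finset.prod_nonneg fun x _ => pow_nonneg (hmodel.theta_pos x).le _
    exact mul_nonneg (mul_nonneg h1 h2) (hmodel.phi_nonneg _)
  -- integrability
  have hint : ∀ e : Hedge n M, MeasureTheory.Integrable (h e) μ := by
    intro e
    refine MeasureTheory.Integrable.mono' (MeasureTheory.integrable_const 1)
      (hmodel.meas e).aestronglyMeasurable ?_
    filter_upwards with ω
    rcases hmodel.bern e ω with h0 | h0 <;> simp [h0]
  -- value of the integral of h e
  have hval : ∀ e : Hedge n M, ∫ ω, h e ω ∂μ = edgeProb g θ Φ e := by
    intro e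
    have hset : MeasurableSet {ω | h e ω = 1} := (hmodel.meas e) (measurableSet_singleton 1)
    have hind : h e = Set.indicator {ω | h e ω = 1} (fun _ => (1 : ℝ)) := by
      funext ω
      rcases hmodel.bern e ω with h0 | h0 <;> simp [Set.indicator_apply, h0]
    rw [hind, MeasureTheory.integral_indicator_const (1 : ℝ) hset, measureReal_def, hmodel.h_eq_one e,
      smul_eq_mul, mul_one, ENNReal.toReal_ofReal (hedge_nonneg e)]
  -- the entrywise formula
  have entry : ∀ i j, expMatrix μ h i j
      = θ i * θ j * Bmat M (fun k => commSize g k) Φ (g i) (g j) := by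
    intro i j
    have hexp : expMatrix μ h i j = ∑ e : Hedge n M,
        (e.mult i : ℝ) * ((e.mult j : ℝ) - if i = j then 1 else 0) / ((e.size : ℝ) - 1)
          * edgeProb g θ Φ e := by
      show (∫ ω, adjMatrix h ω i j ∂μ) = _
      unfold adjMatrix
      rw [MeasureTheory.integral_finset_sum univ (fun e _ => ((hint e).const_mul _))]
      exact Finset.sum_congr rfl fun e _ => by
        rw [MeasureTheory.integral_const_mul, hval e]
    rw [hexp]
    -- abbreviation for the summand, as a function of the size and the multiset
    set T : (N : ℕ) → Sym (Fin n) N → ℝ := fun N s =>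
      (Multiset.count i (s : Multiset (Fin n)) : ℝ)
        * ((Multiset.count j (s : Multiset (Fin n)) : ℝ) - if i = j then 1 else 0)
        / ((N : ℝ) - 1)
        * (((N.factorial / ∏ x, (Multiset.count x (s : Multiset (Fin n))).factorial : ℕ) : ℝ)
            * (∏ x, θ x ^ Multiset.count x (s : Multiset (Fin n)))
            * Φ (Multiset.map g (s : Multiset (Fin n)))) with hT
    have step1 : ∑ e : Hedge n M,
        (e.mult i : ℝ) * ((e.mult j : ℝ) - if i = j then 1 else 0) / ((e.size : ℝ) - 1)
          * edgeProb g θ Φ e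
        = ∑ p ∈ (univ : Finset ((m : Fin (M + 1)) × Sym (Fin n) (m : ℕ))).filter
            (fun p => 2 ≤ (p.1 : ℕ)), T (p.1 : ℕ) p.2 := by
      refine Finset.sum_bij (fun e (_ : e ∈ univ) => e.1) ?_ ?_ ?_ ?_
      · intro e _
        exact Finset.mem_filter.mpr ⟨Finset.mem_univ _, e.2⟩
      · intro a _ b _ hab
        exact Subtype.ext hab
      · intro p hp
        exact ⟨⟨p, (Finset.mem_filter.mp hp).2⟩, Finset.mem_univ _, rfl⟩
      · intro e _
        rfl
    rw [step1, Finset.sum_filter, ← Finset.univ_sigma_univ, Finset.sum_sigma]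
    have step2 : ∑ m : Fin (M + 1), ∑ s : Sym (Fin n) (m : ℕ),
          (if 2 ≤ (m : ℕ) then T (m : ℕ) s else 0)
        = ∑ m : Fin (M + 1),
            (if 2 ≤ (m : ℕ) then ∑ s : Sym (Fin n) (m : ℕ), T (m : ℕ) s else 0) := by
      refine Finset.sum_congr rfl fun m _ => ?_
      by_cases hm : 2 ≤ (m : ℕ) <;> simp [hm]
    have step2' : ∑ m : Fin (M + 1), ∑ s : Sym (Fin n) (m : ℕ),
          (if 2 ≤ (m : ℕ) then T (m : ℕ) s else 0)
        = ∑ N ∈ Finset.range (M + 1),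
            (if 2 ≤ N then ∑ s : Sym (Fin n) N, T N s else 0) := by
      rw [step2]
      exact Fin.sum_univ_eq_sum_range
        (fun N => if 2 ≤ N then ∑ s : Sym (Fin n) N, T N s else 0) (M + 1)
    have hIcc : (Finset.range (M + 1)).filter (fun N => 2 ≤ N) = Finset.Icc 2 M := by
      ext N
      simp only [Finset.mem_filter, Finset.mem_range, Finset.mem_Icc, Nat.lt_succ_iff]
      omega
    have step3 : ∑ N ∈ Finset.range (M + 1),
          (if 2 ≤ N then ∑ s : Sym (Fin n) N, T N s else 0)
        = ∑ N ∈ Finset.Icc 2 M, ∑ s : Sym (Fin n) N, T N s := by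
      rw [← Finset.sum_filter, hIcc]
    refine (Eq.trans (by exact step2') step3).trans ?_
    -- now the per-size identity
    show ∑ N ∈ Finset.Icc 2 M, ∑ s : Sym (Fin n) N, T N s
        = θ i * θ j * ∑ m ∈ Finset.Icc 2 M, (m : ℝ) *
            ∑ v : Fin (m - 2) → Fin K,
              (∏ l, ((commSize g (v l) : ℕ) : ℝ))
                * Φ (g i ::ₘ g j ::ₘ Multiset.map v Finset.univ.val)
    rw [Finset.mul_sum]
    refine Finset.sum_congr rfl fun N hN => ?_
    obtain ⟨m', rfl⟩ : ∃ m', N = m' + 2 :=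
      ⟨N - 2, by have := Finset.mem_Icc.mp hN; omega⟩
    set F : Multiset (Fin n) → ℝ := fun t =>
      (Multiset.count i t : ℝ) * ((Multiset.count j t : ℝ) - if i = j then 1 else 0)
        / ((m' : ℝ) + 2 - 1)
        * ((∏ x, θ x ^ Multiset.count x t) * Φ (Multiset.map g t)) with hF
    have hstep1 : ∀ s : Sym (Fin n) (m' + 2), T (m' + 2) s
        = ((univ.filter (fun f : Fin (m' + 2) → Fin n =>
            Multiset.map f univ.val = (s : Multiset (Fin n)))).card : ℝ)
            * F (s : Multiset (Fin n)) := by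
      intro s
      simp only [hT, hF]
      rw [DCH.bcoef_eq_card (s : Multiset (Fin n)) s.2]
      push_cast
      ring
    calc ∑ s : Sym (Fin n) (m' + 2), T (m' + 2) s
        = ∑ s : Sym (Fin n) (m' + 2),
            ((univ.filter (fun f : Fin (m' + 2) → Fin n =>
              Multiset.map f univ.val = (s : Multiset (Fin n)))).card : ℝ)
              * F (s : Multiset (Fin n)) := Finset.sum_congr rfl fun s _ => hstep1 s
      _ = ∑ f : Fin (m' + 2) → Fin n, F (Multiset.map f univ.val) := DCH.sym_sum _ F
      _ = ((m' : ℝ) + 2) * ∑ f' : Fin m' → Fin n, θ i * θ j *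
            ((∏ l, θ (f' l)) * Φ (g i ::ₘ g j ::ₘ Multiset.map (g ∘ f') univ.val)) := by
          simp only [hF]
          exact DCH.fun_sum_eq g θ Φ m' i j
      _ = ((m' : ℝ) + 2) * (θ i * θ j * ∑ v : Fin m' → Fin K,
            (∏ l, ((commSize g (v l) : ℕ) : ℝ))
              * Φ (g i ::ₘ g j ::ₘ Multiset.map v Finset.univ.val)) := by
          congr 1
          rw [← Finset.mul_sum]
          congr 1
          exact DCH.label_group g θ (fun k => ((commSize g k : ℕ) : ℝ))
            (fun k => by rw [Finset.sum_filter]; exact hnorm k) m'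
            (fun t => Φ (g i ::ₘ g j ::ₘ t))
      _ = θ i * θ j * (((m' + 2 : ℕ) : ℝ) * ∑ v : Fin m' → Fin K,
            (∏ l, ((commSize g (v l) : ℕ) : ℝ))
              * Φ (g i ::ₘ g j ::ₘ Multiset.map v Finset.univ.val)) := by
          push_cast
          ring
  -- symmetry of B
  have hsymm : (Bmat M (fun k => commSize g k) Φ).IsSymm := by
    rw [Matrix.IsSymm.ext_iff]
    intro r s
    refine Finset.sum_congr rfl fun m _ => ?_
    congr 1
    refine Finset.sum_congr rfl fun v _ => ?_
    rw [Multiset.cons_swap]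
  -- the matrix factorization
  have hZB : ∀ i j, (Zmat g * Bmat M (fun k => commSize g k) Φ * (Zmat g)ᵀ) i j
      = Bmat M (fun k => commSize g k) Φ (g i) (g j) := by
    intro i j
    rw [Matrix.mul_apply]
    have hcol : ∀ r, (Zmat g * Bmat M (fun k => commSize g k) Φ) i r
        = Bmat M (fun k => commSize g k) Φ (g i) r := by
      intro r
      rw [Matrix.mul_apply]
      simp [Zmat, ite_mul, Finset.sum_ite_eq']
    rw [Finset.sum_congr rfl fun r (_ : r ∈ univ) => by rw [hcol r]]
    simp [Zmat, Matrix.transpose_apply, mul_ite, Finset.sum_ite_eq']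
  have hmat : expMatrix μ h =
      Matrix.diagonal θ * (Zmat g * Bmat M (fun k => commSize g k) Φ * (Zmat g)ᵀ) *
        Matrix.diagonal θ := by
    ext i j
    rw [entry i j, Matrix.mul_apply]
    have hrow : ∀ r, (Matrix.diagonal θ *
        (Zmat g * Bmat M (fun k => commSize g k) Φ * (Zmat g)ᵀ)) i r
        = θ i * (Zmat g * Bmat M (fun k => commSize g k) Φ * (Zmat g)ᵀ) i r := by
      intro r
      rw [Matrix.mul_apply]
      simp [Matrix.diagonal_apply, ite_mul, Finset.sum_ite_eq']
    rw [Finset.sum_congr rfl fun r (_ : r ∈ univ) => by rw [hrow r]]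
    simp only [Matrix.diagonal_apply, mul_ite, mul_zero, Finset.sum_ite_eq', Finset.mem_univ,
      if_true]
    rw [hZB i j]
    ring
  refine ⟨hsymm, entry, hmat, ?_⟩
  have hfac : expMatrix μ h = (Matrix.diagonal θ * Zmat g) *
      (Bmat M (fun k => commSize g k) Φ * ((Zmat g)ᵀ * Matrix.diagonal θ)) := by
    rw [hmat]
    simp only [Matrix.mul_assoc]
  rw [hfac]
  refine le_trans (Matrix.rank_mul_le_left _ _) ?_
  refine le_trans (Matrix.rank_le_card_width _) ?_
  simp

end
end

section
/- Let Q ∈ ℝ^{K×K} be orthogonal, g : [n] → [K] a labeling, and U* ∈ ℝ^{n×K} the matrix with rows U*_{i·} = Q_{g_i·}. Let V ∈ ℝ^{n×K} be any matrix whose rows all have Euclidean norm 1, let O ∈ ℝ^{K×K} be orthogonal, and set ε = ‖V O − U*‖_{2,∞}. Then for all i, j ∈ [n]: if g_i = g_j then ‖V_{i·} − V_{j·}‖ ≤ 2ε, and if g_i ≠ g_j then ‖V_{i·} − V_{j·}‖ ≥ √2 − 2ε. Consequently, if ε < 1/(2√2) then for all i, j: ‖V_{i·} − V_{j·}‖ <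 1/√2 if and only if g_i = g_j. -/
open MeasureTheory ProbabilityTheory Finset Matrix

noncomputable section

private lemma orth_dot' {K : ℕ} {O : Matrix (Fin K) (Fin K) ℝ}
    (hO : O ∈ Matrix.orthogonalGroup (Fin K) ℝ) (x y : Fin K → ℝ) :
    (Matrix.vecMul x O) ⬝ᵥ (Matrix.vecMul y O) = x ⬝ᵥ y := by
  have h1 : O * Oᵀ = 1 := by
    have h := hO.2
    simpa [Matrix.star_eq_conjTranspose, Matrix.conjTranspose_eq_transpose_of_trivial] using h
  calc (Matrix.vecMul x O) ⬝ᵥ (Matrix.vecMul y O)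
      = (Matrix.vecMul x O) ⬝ᵥ (Matrix.mulVec Oᵀ y) := by rw [Matrix.mulVec_transpose]
    _ = Matrix.vecMul (Matrix.vecMul x O) Oᵀ ⬝ᵥ y := (Matrix.dotProduct_mulVec _ _ _)
    _ = Matrix.vecMul x (O * Oᵀ) ⬝ᵥ y := by rw [Matrix.vecMul_vecMul]
    _ = x ⬝ᵥ y := by rw [h1, Matrix.vecMul_one]

private lemma norm_sub_e' {K : ℕ} (x y : Fin K → ℝ) :
    ‖(WithLp.equiv 2 (Fin K → ℝ)).symm x - (WithLp.equiv 2 (Fin K → ℝ)).symm y‖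
      = Real.sqrt (∑ k, (x k - y k) ^ 2) := by
  rw [EuclideanSpace.norm_eq]
  congr 1
  apply Finset.sum_congr rfl
  intro k _
  simp [Real.norm_eq_abs, sq_abs]

theorem stmt_3 {n K : ℕ} (Q : Matrix (Fin K) (Fin K) ℝ)
    (hQ : Q ∈ Matrix.orthogonalGroup (Fin K) ℝ) (g : Fin n → Fin K)
    (Ustar : Matrix (Fin n) (Fin K) ℝ) (hUstar : ∀ i k, Ustar i k = Q (g i) k)
    (V : Matrix (Fin n) (Fin K) ℝ) (hV : ∀ i, rowNorm V i = 1)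
    (O : Matrix (Fin K) (Fin K) ℝ) (hO : O ∈ Matrix.orthogonalGroup (Fin K) ℝ)
    (ε : ℝ) (hε : ε = norm2inf (V * O - Ustar)) :
    (∀ i j, g i = g j → Real.sqrt (∑ k, (V i k - V j k) ^ 2) ≤ 2 * ε) ∧
    (∀ i j, g i ≠ g j → Real.sqrt 2 - 2 * ε ≤ Real.sqrt (∑ k, (V i k - V j k) ^ 2)) ∧
    (ε < 1 / (2 * Real.sqrt 2) →
      ∀ i j, (Real.sqrt (∑ k, (V i k - V j k) ^ 2) < 1 / Real.sqrt 2 ↔ g i = g j)) := by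
  set e := (WithLp.equiv 2 (Fin K → ℝ)).symm with he
  -- row bound
  have hεrow : ∀ i : Fin n, ‖e ((V * O) i) - e (Ustar i)‖ ≤ ε := by
    intro i
    rw [norm_sub_e', hε]
    have hr : rowNorm (V * O - Ustar) i = Real.sqrt (∑ k, ((V * O) i k - Ustar i k) ^ 2) := by
      unfold rowNorm; simp [Matrix.sub_apply]
    rw [← hr]
    exact le_ciSup (Set.Finite.bddAbove (Set.finite_range _)) i
  -- orthogonal invariance: distance between V-rows equals distance between (V*O)-rows
  have hinv : ∀ i j : Fin n, Real.sqrt (∑ k, (V i k - V j k) ^ 2)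
      = ‖e ((V * O) i) - e ((V * O) j)‖ := by
    intro i j
    rw [norm_sub_e']
    congr 1
    have h1 : ∀ k, (V * O) i k - (V * O) j k
        = Matrix.vecMul (fun a => V i a - V j a) O k := by
      intro k
      simp [Matrix.mul_apply, Matrix.vecMul, dotProduct, sub_mul,
        Finset.sum_sub_distrib]
    have h2 := orth_dot' hO (fun a => V i a - V j a) (fun a => V i a - V j a)
    simp only [dotProduct] at h2
    calc ∑ k, (V i k - V j k) ^ 2 = ∑ k, (V i k - V j k) * (V i k - V j k) := by
          simp [pow_two]
      _ = ∑ k, Matrix.vecMul (fun a => V i a - V j a) O k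
            * Matrix.vecMul (fun a => V i a - V j a) O k := h2.symm
      _ = ∑ k, ((V * O) i k - (V * O) j k) ^ 2 := by
          simp [pow_two, h1]
  -- rows of Q at distance sqrt 2
  have hQdist : ∀ i j : Fin n, g i ≠ g j → ‖e (Ustar i) - e (Ustar j)‖ = Real.sqrt 2 := by
    intro i j hij
    rw [norm_sub_e']
    congr 1
    have h1 : Q * Qᵀ = 1 := by
      have h := hQ.2
      simpa [Matrix.star_eq_conjTranspose, Matrix.conjTranspose_eq_transpose_of_trivial] using h
    have hdot : ∀ a b : Fin K, ∑ k, Q a k * Q b k = if a = b then 1 else 0 := by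
      intro a b
      have := congrFun (congrFun h1 a) b
      simpa [Matrix.mul_apply, Matrix.one_apply] using this
    have expand : ∑ k, (Ustar i k - Ustar j k) ^ 2
        = (∑ k, Q (g i) k * Q (g i) k) - 2 * (∑ k, Q (g i) k * Q (g j) k)
          + (∑ k, Q (g j) k * Q (g j) k) := by
      simp only [hUstar]
      rw [Finset.mul_sum, ← Finset.sum_sub_distrib, ← Finset.sum_add_distrib]
      apply Finset.sum_congr rfl
      intro k _
      ring
    rw [expand, hdot, hdot, hdot]
    simp [hij]
    norm_num
  have upper : ∀ i j, g i = g j → Real.sqrt (∑ k, (V i k - V j k) ^ 2) ≤ 2 * ε := by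
    intro i j hij
    have hU : Ustar i = Ustar j := by
      funext k; rw [hUstar, hUstar, hij]
    calc Real.sqrt (∑ k, (V i k - V j k) ^ 2) = ‖e ((V * O) i) - e ((V * O) j)‖ := hinv i j
      _ ≤ ‖e ((V * O) i) - e (Ustar i)‖ + ‖e (Ustar j) - e ((V * O) j)‖ := by
          rw [hU]
          exact norm_sub_le_norm_sub_add_norm_sub _ _ _
      _ ≤ ε + ε := by
          apply add_le_add (hεrow i)
          rw [norm_sub_rev]; exact hεrow j
      _ = 2 * ε := by ring
  have lower : ∀ i j, g i ≠ g j →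
      Real.sqrt 2 - 2 * ε ≤ Real.sqrt (∑ k, (V i k - V j k) ^ 2) := by
    intro i j hij
    have tri : ‖e (Ustar i) - e (Ustar j)‖ ≤
        ‖e (Ustar i) - e ((V * O) i)‖ + ‖e ((V * O) i) - e ((V * O) j)‖
          + ‖e ((V * O) j) - e (Ustar j)‖ := by
      calc ‖e (Ustar i) - e (Ustar j)‖
          ≤ ‖e (Ustar i) - e ((V * O) j)‖ + ‖e ((V * O) j) - e (Ustar j)‖ :=
            norm_sub_le_norm_sub_add_norm_sub _ _ _
        _ ≤ (‖e (Ustar i) - e ((V * O) i)‖ + ‖e ((V * O) i) - e ((V * O) j)‖)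
            + ‖e ((V * O) j) - e (Ustar j)‖ := by
            gcongr
            exact norm_sub_le_norm_sub_add_norm_sub _ _ _
    rw [hQdist i j hij] at tri
    have h1 : ‖e (Ustar i) - e ((V * O) i)‖ ≤ ε := by rw [norm_sub_rev]; exact hεrow i
    have h2 : ‖e ((V * O) j) - e (Ustar j)‖ ≤ ε := hεrow j
    rw [hinv i j]
    linarith
  refine ⟨upper, lower, ?_⟩
  intro hεs i j
  have hs2 : Real.sqrt 2 * Real.sqrt 2 = 2 := Real.mul_self_sqrt (by norm_num)
  have hs2pos : 0 < Real.sqrt 2 := Real.sqrt_pos.mpr (by norm_num)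
  have hεs' : ε * (2 * Real.sqrt 2) < 1 :=
    (lt_div_iff₀ (by positivity : (0:ℝ) < 2 * Real.sqrt 2)).mp hεs
  constructor
  · intro hlt
    by_contra hne
    have hl := lower i j hne
    have hc : Real.sqrt 2 - 2 * ε < 1 / Real.sqrt 2 := lt_of_le_of_lt hl hlt
    rw [lt_div_iff₀ hs2pos] at hc
    nlinarith
  · intro heq
    have hu := upper i j heq
    have h2ε : 2 * ε < 1 / Real.sqrt 2 := by
      rw [lt_div_iff₀ hs2pos]
      nlinarith
    linarith


end
end

section
/- Let P ∈ ℝ^{n×n} be a matrix with nonnegative entries satisfying max_{i,j} P_{ij} ≤ d/n for some d > 0. Then for all vectors x, y ∈ ℝ^n with ‖x‖ ≤ 1 and ‖y‖ ≤ 1, the contribution of the heavy pairs satisfies | Σ_{(i,j): |x_i y_j| > √d/n} x_i y_j P_{ij} | ≤ √d. -/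
open MeasureTheory ProbabilityTheory Finset Matrix

noncomputable section

theorem stmt_10 (n : ℕ) (hn : 1 ≤ n) (d : ℝ) (hd : 0 < d)
    (P : Matrix (Fin n) (Fin n) ℝ) (hP : ∀ i j, 0 ≤ P i j) (hPd : ∀ i j, P i j ≤ d / n)
    (x y : Fin n → ℝ) (hx : Real.sqrt (∑ i, x i ^ 2) ≤ 1)
    (hy : Real.sqrt (∑ i, y i ^ 2) ≤ 1) :
    |∑ i, ∑ j, if Real.sqrt d / n < |x i * y j| then x i * y j * P i j else 0| ≤
      Real.sqrt d := by
  have hn0 : (0:ℝ) < n := by exact_mod_cast hn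
  have hSx : ∑ i, x i ^ 2 ≤ 1 := by
    have h0 : (0:ℝ) ≤ ∑ i, x i ^ 2 := Finset.sum_nonneg fun i _ => sq_nonneg _
    nlinarith [Real.sq_sqrt h0, Real.sqrt_nonneg (∑ i, x i ^ 2)]
  have hSy : ∑ i, y i ^ 2 ≤ 1 := by
    have h0 : (0:ℝ) ≤ ∑ i, y i ^ 2 := Finset.sum_nonneg fun i _ => sq_nonneg _
    nlinarith [Real.sq_sqrt h0, Real.sqrt_nonneg (∑ i, y i ^ 2)]
  have hsd : (0:ℝ) ≤ Real.sqrt d := Real.sqrt_nonneg d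
  have key : ∀ i j, |if Real.sqrt d / n < |x i * y j| then x i * y j * P i j else 0|
      ≤ Real.sqrt d * (x i ^ 2 * y j ^ 2) := by
    intro i j
    split_ifs with h
    · rw [abs_mul, abs_of_nonneg (hP i j)]
      have h1 := hPd i j
      have h2 : Real.sqrt d / n < |x i * y j| := h
      have h3 : Real.sqrt d ^ 2 = d := Real.sq_sqrt hd.le
      have h4 : |x i * y j| ^ 2 = x i ^ 2 * y j ^ 2 := by
        rw [sq_abs, mul_pow]
      have ha : 0 < |x i * y j| := lt_of_le_of_lt (by positivity) h2
      have hnp : P i j * n ≤ d := (le_div_iff₀ hn0).mp h1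
      have hnp' : P i j * n ≤ Real.sqrt d ^ 2 := by rw [h3]; exact hnp
      have hsn : Real.sqrt d < |x i * y j| * n := (div_lt_iff₀ hn0).mp h2
      have e1 : |x i * y j| * P i j * n ≤ |x i * y j| * Real.sqrt d ^ 2 := by
        nlinarith [mul_le_mul_of_nonneg_left hnp' ha.le]
      have e2 : |x i * y j| * Real.sqrt d ^ 2
          ≤ Real.sqrt d * (x i ^ 2 * y j ^ 2) * n := by
        rw [← h4]
        nlinarith [mul_le_mul_of_nonneg_left hsn.le (mul_nonneg ha.le hsd)]
      exact le_of_mul_le_mul_right (e1.trans e2) hn0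
    · simp only [abs_zero]
      positivity
  calc |∑ i, ∑ j, if Real.sqrt d / n < |x i * y j| then x i * y j * P i j else 0|
      ≤ ∑ i, ∑ j, |if Real.sqrt d / n < |x i * y j| then x i * y j * P i j else 0| := by
        refine (Finset.abs_sum_le_sum_abs _ _).trans ?_
        exact Finset.sum_le_sum fun i _ => Finset.abs_sum_le_sum_abs _ _
    _ ≤ ∑ i, ∑ j, Real.sqrt d * (x i ^ 2 * y j ^ 2) :=
        Finset.sum_le_sum fun i _ => Finset.sum_le_sum fun j _ => key i j
    _ = Real.sqrt d * ((∑ i, x i ^ 2) * (∑ j, y j ^ 2)) := by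
        rw [Finset.sum_mul_sum, Finset.mul_sum]
        exact Finset.sum_congr rfl fun i _ => by rw [Finset.mul_sum]
    _ ≤ Real.sqrt d * 1 := by
        have h2 : (0:ℝ) ≤ ∑ j, y j ^ 2 := Finset.sum_nonneg fun i _ => sq_nonneg _
        exact mul_le_mul_of_nonneg_left (mul_le_one₀ hSx h2 hSy) hsd
    _ = Real.sqrt d := mul_one _

end
end

section
/- Let P ∈ ℝ^{n×n} be symmetric with rank(P) ≤ K, eigenvalues λ_1,…,λ_n ordered so that |λ_1| ≥ … ≥ |λ_n| (thus λ_{K+1} = … = λ_n = 0), and λ_K ≠ 0. Let A, A' ∈ ℝ^{n×n} be symmetric with ‖A − P‖ ≤ |λ_K|/4 and ‖A' − P‖ ≤ |λ_K|/4. Let Û ∈ ℝ^{n×K} (resp. Û' ∈ ℝ^{n×K}) have as columns orthonormal eigenvectors of A (resp. A') corresponding to its K largest-in-absolute-value eigenvalues. Then ‖Û Û^T − Û' (Û')^T‖ ≤ 2 ‖(A − A') Û'‖ / |λ_K|. -/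
open MeasureTheory ProbabilityTheory Finset Matrix

noncomputable section

open scoped Matrix.Norms.L2Operator RealInnerProductSpace

noncomputable section
namespace DKhelp

variable {m k : ℕ}

/-- plain vector as element of Euclidean space -/
def ev {m : ℕ} (v : Fin m → ℝ) : EuclideanSpace ℝ (Fin m) := (WithLp.equiv 2 _).symm v

lemma inner_ev (x y : Fin m → ℝ) : (inner ℝ (ev x) (ev y) : ℝ) = x ⬝ᵥ y := by
  simp [ev, PiLp.inner_apply, RCLike.inner_apply, dotProduct, mul_comm]

lemma norm_ev_sq (x : Fin m → ℝ) : ‖ev x‖ ^ 2 = x ⬝ᵥ x := by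
  rw [← real_inner_self_eq_norm_sq, inner_ev]

lemma norm_ev_nonneg (x : Fin m → ℝ) : 0 ≤ ‖ev x‖ := norm_nonneg _

lemma ev_add (x y : Fin m → ℝ) : ev (x + y) = ev x + ev y := rfl
lemma ev_sub (x y : Fin m → ℝ) : ev (x - y) = ev x - ev y := rfl

lemma mulVec_norm_le (A : Matrix (Fin m) (Fin k) ℝ) (x : Fin k → ℝ) :
    ‖ev (A *ᵥ x)‖ ≤ ‖A‖ * ‖ev x‖ :=
  Matrix.l2_opNorm_mulVec A (ev x)

lemma opNorm_le {c : ℝ} (hc : 0 ≤ c) (A : Matrix (Fin m) (Fin k) ℝ)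
    (h : ∀ x : Fin k → ℝ, ‖ev (A *ᵥ x)‖ ≤ c * ‖ev x‖) : ‖A‖ ≤ c := by
  rw [Matrix.l2_opNorm_def]
  apply ContinuousLinearMap.opNorm_le_bound _ hc
  intro y
  exact h (WithLp.equiv 2 _ y)

-- continuation fragment: append to t2 content
variable {n : ℕ}

lemma transpose_norm (A : Matrix (Fin m) (Fin k) ℝ) : ‖Aᵀ‖ = ‖A‖ := by
  have : Aᴴ = Aᵀ := by ext i j; simp [Matrix.conjTranspose_apply]
  rw [← this, Matrix.l2_opNorm_conjTranspose A]

lemma dot_comm' (x y : Fin m → ℝ) : x ⬝ᵥ y = y ⬝ᵥ x := dotProduct_comm x y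

/-- if `MᵀM = 1` then `M` preserves norms -/
lemma isometry_of_orth {M : Matrix (Fin m) (Fin k) ℝ} (h : Mᵀ * M = 1)
    (x : Fin k → ℝ) : ‖ev (M *ᵥ x)‖ = ‖ev x‖ := by
  have h2 : (M *ᵥ x) ⬝ᵥ (M *ᵥ x) = x ⬝ᵥ x := by
    rw [Matrix.dotProduct_mulVec, ← Matrix.mulVec_transpose, Matrix.mulVec_mulVec, h,
      Matrix.one_mulVec]
  have := norm_ev_sq (M *ᵥ x)
  rw [h2, ← norm_ev_sq x] at this
  nlinarith [norm_ev_nonneg (M *ᵥ x), norm_ev_nonneg x]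

lemma norm_le_one_of_orth {M : Matrix (Fin m) (Fin k) ℝ} (h : Mᵀ * M = 1) : ‖M‖ ≤ 1 := by
  apply opNorm_le zero_le_one
  intro x
  rw [isometry_of_orth h, one_mul]

lemma norm_le_one_of_orth' {M : Matrix (Fin m) (Fin k) ℝ} (h : Mᵀ * M = 1) : ‖Mᵀ‖ ≤ 1 := by
  rw [transpose_norm]; exact norm_le_one_of_orth h

lemma norm_ev_eq_sqrt (x : Fin m → ℝ) : ‖ev x‖ = Real.sqrt (∑ i, x i ^ 2) := by
  rw [← Real.sqrt_sq (norm_ev_nonneg x), norm_ev_sq]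
  congr 1; simp [dotProduct, sq]

lemma diagonal_mulVec_eq (d : Fin m → ℝ) (x : Fin m → ℝ) :
    (Matrix.diagonal d) *ᵥ x = fun i => d i * x i := by
  ext i; simp [Matrix.mulVec, Matrix.diagonal, dotProduct]

lemma norm_diagonal_le {d : Fin m → ℝ} {c : ℝ} (hc : 0 ≤ c) (h : ∀ i, |d i| ≤ c) :
    ‖(Matrix.diagonal d : Matrix (Fin m) (Fin m) ℝ)‖ ≤ c := by
  apply opNorm_le hc
  intro x
  rw [norm_ev_eq_sqrt, norm_ev_eq_sqrt, diagonal_mulVec_eq]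
  rw [← Real.sqrt_sq hc, ← Real.sqrt_mul (by positivity)]
  apply Real.sqrt_le_sqrt
  rw [Finset.mul_sum]
  apply Finset.sum_le_sum
  intro i _
  have := h i
  have h1 : (d i * x i) ^ 2 = d i ^ 2 * x i ^ 2 := by ring
  rw [h1]
  apply mul_le_mul_of_nonneg_right _ (sq_nonneg _)
  calc d i ^ 2 = |d i| ^ 2 := (sq_abs _).symm
    _ ≤ c ^ 2 := by apply pow_le_pow_left₀ (abs_nonneg _) this

lemma pyth {x y : Fin m → ℝ} (h : x ⬝ᵥ y = 0) :
    ‖ev (x + y)‖ ^ 2 = ‖ev x‖ ^ 2 + ‖ev y‖ ^ 2 := by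
  rw [ev_add]
  rw [norm_add_sq_real, inner_ev, h]
  ring

/-- for symmetric S, `(S x) ⬝ y = x ⬝ (S y)` -/
lemma dot_symm {S : Matrix (Fin m) (Fin m) ℝ} (hS : Sᵀ = S) (x y : Fin m → ℝ) :
    (S *ᵥ x) ⬝ᵥ y = x ⬝ᵥ (S *ᵥ y) := by
  rw [Matrix.dotProduct_mulVec x S y, ← Matrix.mulVec_transpose, hS, dot_comm']

section eigen
variable {B : Matrix (Fin n) (Fin n) ℝ} {μ : Fin n → ℝ} {w : Fin n → Fin n → ℝ}

/-- matrix with rows the eigenvectors -/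
def eigW (w : Fin n → Fin n → ℝ) : Matrix (Fin n) (Fin n) ℝ := Matrix.of w

lemma eigW_mul_transpose (hE : EigenData B μ w) : eigW w * (eigW w)ᵀ = 1 := by
  ext j l
  simp only [Matrix.mul_apply, eigW, Matrix.transpose_apply, Matrix.of_apply, Matrix.one_apply]
  exact hE.ortho j l

lemma transpose_mul_eigW (hE : EigenData B μ w) : (eigW w)ᵀ * eigW w = 1 :=
  mul_eq_one_comm.mp (eigW_mul_transpose hE)

lemma eig_decomp (hE : EigenData B μ w) :
    B = (eigW w)ᵀ * Matrix.diagonal μ * eigW w := by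
  have h1 : B * (eigW w)ᵀ = (eigW w)ᵀ * Matrix.diagonal μ := by
    ext i j
    have := congrFun (hE.eig j) i
    simp only [Matrix.mulVec, dotProduct, Pi.smul_apply, smul_eq_mul] at this
    simp only [Matrix.mul_apply, Matrix.transpose_apply, eigW, Matrix.of_apply,
      Matrix.diagonal_apply]
    have h2 : ∑ x, w x i * (if x = j then μ x else 0) = w j i * μ j := by
      rw [Finset.sum_congr rfl (fun x _ => mul_ite_zero ..),
        Finset.sum_ite_eq' Finset.univ j (fun x => w x i * μ x)]
      simp
    rw [h2, this]
    ring
  calc B = B * ((eigW w)ᵀ * eigW w) := by rw [transpose_mul_eigW hE, Matrix.mul_one]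
    _ = (B * (eigW w)ᵀ) * eigW w := by rw [Matrix.mul_assoc]
    _ = (eigW w)ᵀ * Matrix.diagonal μ * eigW w := by rw [h1]

lemma eigW_coord (v : Fin n → ℝ) (j : Fin n) : (eigW w *ᵥ v) j = w j ⬝ᵥ v := rfl

lemma quad_norm (hE : EigenData B μ w) (v : Fin n → ℝ) :
    ‖ev (B *ᵥ v)‖ = Real.sqrt (∑ j, (μ j * (w j ⬝ᵥ v)) ^ 2) := by
  have h1 : B *ᵥ v = (eigW w)ᵀ *ᵥ (Matrix.diagonal μ *ᵥ (eigW w *ᵥ v)) := by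
    rw [Matrix.mulVec_mulVec, Matrix.mulVec_mulVec, ← eig_decomp hE]
  rw [h1, isometry_of_orth (by rw [Matrix.transpose_transpose]; exact eigW_mul_transpose hE),
    norm_ev_eq_sqrt, diagonal_mulVec_eq]
  rfl

lemma coord_norm (hE : EigenData B μ w) (v : Fin n → ℝ) :
    ‖ev v‖ = Real.sqrt (∑ j, (w j ⬝ᵥ v) ^ 2) := by
  have := isometry_of_orth (transpose_mul_eigW hE) v
  rw [← this, norm_ev_eq_sqrt]
  rfl

lemma quad_le (hE : EigenData B μ w) {v : Fin n → ℝ} {r : ℝ} (hr : 0 ≤ r)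
    (h : ∀ j, w j ⬝ᵥ v ≠ 0 → |μ j| ≤ r) : ‖ev (B *ᵥ v)‖ ≤ r * ‖ev v‖ := by
  rw [quad_norm hE, coord_norm hE, ← Real.sqrt_sq hr, ← Real.sqrt_mul (by positivity)]
  apply Real.sqrt_le_sqrt
  rw [Finset.mul_sum]
  apply Finset.sum_le_sum
  intro j _
  by_cases hc : w j ⬝ᵥ v = 0
  · simp [hc]
  · have := h j hc
    have h2 : (μ j * (w j ⬝ᵥ v)) ^ 2 = μ j ^ 2 * (w j ⬝ᵥ v) ^ 2 := by ring
    rw [h2]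
    apply mul_le_mul_of_nonneg_right _ (sq_nonneg _)
    calc μ j ^ 2 = |μ j| ^ 2 := (sq_abs _).symm
      _ ≤ r ^ 2 := by apply pow_le_pow_left₀ (abs_nonneg _) this

lemma quad_ge (hE : EigenData B μ w) {v : Fin n → ℝ} {r : ℝ} (hr : 0 ≤ r)
    (h : ∀ j, w j ⬝ᵥ v ≠ 0 → r ≤ |μ j|) : r * ‖ev v‖ ≤ ‖ev (B *ᵥ v)‖ := by
  rw [quad_norm hE, coord_norm hE, ← Real.sqrt_sq hr, ← Real.sqrt_mul (by positivity)]
  apply Real.sqrt_le_sqrt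
  rw [Finset.mul_sum]
  apply Finset.sum_le_sum
  intro j _
  by_cases hc : w j ⬝ᵥ v = 0
  · simp [hc]
  · have := h j hc
    have h2 : (μ j * (w j ⬝ᵥ v)) ^ 2 = μ j ^ 2 * (w j ⬝ᵥ v) ^ 2 := by ring
    rw [h2]
    apply mul_le_mul_of_nonneg_right _ (sq_nonneg _)
    calc r ^ 2 ≤ |μ j| ^ 2 := by apply pow_le_pow_left₀ hr this
      _ = μ j ^ 2 := sq_abs _

end eigen

section spans
variable {B : Matrix (Fin n) (Fin n) ℝ} {μ : Fin n → ℝ} {w : Fin n → Fin n → ℝ}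

lemma ortho_linearIndependent (hE : EigenData B μ w) (s : Finset (Fin n)) :
    LinearIndependent ℝ (fun j : s => w j) := by
  rw [Fintype.linearIndependent_iff]
  intro g hg j₀
  have h : w (j₀ : Fin n) ⬝ᵥ (∑ j : s, g j • w (j : Fin n)) = g j₀ := by
    rw [dotProduct]
    simp only [Finset.sum_apply, Pi.smul_apply, smul_eq_mul, Finset.mul_sum]
    rw [Finset.sum_comm]
    have e1 : ∀ j : s, ∑ i, w (j₀ : Fin n) i * (g j * w (j : Fin n) i)
        = g j * (w (j₀ : Fin n) ⬝ᵥ w (j : Fin n)) := by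
      intro j; rw [dotProduct, Finset.mul_sum]
      exact Finset.sum_congr rfl fun i _ => by ring
    rw [Finset.sum_congr rfl fun j _ => e1 j]
    simp only [hE.ortho]
    have e2 : ∀ j : s, (g j * if (j₀ : Fin n) = (j : Fin n) then (1:ℝ) else 0)
        = if j = j₀ then g j else 0 := by
      intro j
      by_cases hjj : j = j₀
      · subst hjj; simp
      · rw [if_neg hjj, if_neg, mul_zero]
        intro hcon; exact hjj (Subtype.ext hcon.symm)
    rw [Finset.sum_congr rfl fun j _ => e2 j, Finset.sum_ite_eq' Finset.univ j₀ g]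
    simp
  rw [hg] at h
  simpa using h.symm

lemma span_finrank (hE : EigenData B μ w) (s : Finset (Fin n)) :
    Module.finrank ℝ (Submodule.span ℝ (w '' (s : Set (Fin n)))) = s.card := by
  have h1 : Set.range (fun j : s => w j) = w '' (s : Set (Fin n)) := by
    have : (fun j : s => w j) = w ∘ Subtype.val := rfl
    rw [this, Set.range_comp, Subtype.range_val]
  rw [← h1, finrank_span_eq_card (ortho_linearIndependent hE s)]
  simp

lemma dot_eq_zero_of_mem_span (hE : EigenData B μ w) (s : Finset (Fin n))
    {v : Fin n → ℝ} (hv : v ∈ Submodule.span ℝ (w '' (s : Set (Fin n))))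
    {l : Fin n} (hl : l ∉ s) : w l ⬝ᵥ v = 0 := by
  induction hv using Submodule.span_induction with
  | mem x hx =>
    obtain ⟨j, hj, rfl⟩ := hx
    rw [hE.ortho l j, if_neg]
    intro h; exact hl (h ▸ hj)
  | zero => simp
  | add x y _ _ hx hy => rw [dotProduct_add, hx, hy, add_zero]
  | smul c x _ hx => rw [dotProduct_smul, hx, smul_zero]

end spans

lemma exists_ne_zero_mem_inf {S₁ S₂ : Submodule ℝ (Fin n → ℝ)}
    (h : n < Module.finrank ℝ S₁ + Module.finrank ℝ S₂) :
    ∃ v : Fin n → ℝ, v ≠ 0 ∧ v ∈ S₁ ∧ v ∈ S₂ := by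
  have h1 := Submodule.finrank_sup_add_finrank_inf_eq S₁ S₂
  have h2 : Module.finrank ℝ ↥(S₁ ⊔ S₂) ≤ n := by
    have := Submodule.finrank_le (S₁ ⊔ S₂)
    rwa [Module.finrank_fintype_fun_eq_card, Fintype.card_fin] at this
  have h3 : 0 < Module.finrank ℝ ↥(S₁ ⊓ S₂) := by omega
  by_contra hc
  push_neg at hc
  have : S₁ ⊓ S₂ = ⊥ := by
    rw [Submodule.eq_bot_iff]
    intro x ⟨hx1, hx2⟩
    by_contra hx0
    exact absurd hx2 (hc x hx0 hx1)
  rw [this, finrank_bot] at h3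
  omega


section projection
variable {U : Matrix (Fin n) (Fin k) ℝ} (h : Uᵀ * U = 1)

lemma proj_symm : (U * Uᵀ)ᵀ = U * Uᵀ := by
  rw [Matrix.transpose_mul, Matrix.transpose_transpose]

include h in
lemma proj_idem : (U * Uᵀ) * (U * Uᵀ) = U * Uᵀ := by
  calc (U * Uᵀ) * (U * Uᵀ) = U * (Uᵀ * U) * Uᵀ := by
        rw [Matrix.mul_assoc, Matrix.mul_assoc, Matrix.mul_assoc]
    _ = U * Uᵀ := by rw [h, Matrix.mul_one]

include h in
lemma proj_pyth (x : Fin n → ℝ) :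
    ‖ev ((U * Uᵀ) *ᵥ x)‖ ^ 2 + ‖ev ((1 - U * Uᵀ) *ᵥ x)‖ ^ 2 = ‖ev x‖ ^ 2 := by
  set Q := U * Uᵀ with hQ
  have horth : (Q *ᵥ x) ⬝ᵥ ((1 - Q) *ᵥ x) = 0 := by
    rw [dot_symm (proj_symm) x ((1 - Q) *ᵥ x), Matrix.mulVec_mulVec]
    have : Q * (1 - Q) = 0 := by
      rw [Matrix.mul_sub, Matrix.mul_one, proj_idem h, sub_self]
    rw [this]
    simp
  have hsum : Q *ᵥ x + (1 - Q) *ᵥ x = x := by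
    rw [← Matrix.add_mulVec]
    simp
  have := pyth horth
  rw [hsum] at this
  exact this.symm
include h in
lemma proj_mulVec_le (x : Fin n → ℝ) : ‖ev ((U * Uᵀ) *ᵥ x)‖ ≤ ‖ev x‖ := by
  have := proj_pyth h x
  nlinarith [norm_ev_nonneg ((U * Uᵀ) *ᵥ x), norm_ev_nonneg x,
    sq_nonneg (‖ev ((1 - U * Uᵀ) *ᵥ x)‖)]

include h in
lemma onemproj_mulVec_le (x : Fin n → ℝ) : ‖ev ((1 - U * Uᵀ) *ᵥ x)‖ ≤ ‖ev x‖ := by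
  have := proj_pyth h x
  nlinarith [norm_ev_nonneg ((1 - U * Uᵀ) *ᵥ x), norm_ev_nonneg x,
    sq_nonneg (‖ev ((U * Uᵀ) *ᵥ x)‖)]

include h in
lemma norm_onemproj_le : ‖(1 - U * Uᵀ : Matrix (Fin n) (Fin n) ℝ)‖ ≤ 1 := by
  apply opNorm_le zero_le_one
  intro x
  rw [one_mul]
  exact onemproj_mulVec_le h x

include h in
lemma proj_mulVec_norm (x : Fin n → ℝ) : ‖ev ((U * Uᵀ) *ᵥ x)‖ = ‖ev (Uᵀ *ᵥ x)‖ := by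
  rw [← Matrix.mulVec_mulVec]
  exact isometry_of_orth h _

/-- the combination lemma: `‖Q - Q'‖ ≤ max` of the one-sided sin-theta norms -/
lemma combine {U U' : Matrix (Fin n) (Fin k) ℝ} (hU : Uᵀ * U = 1) (hU' : U'ᵀ * U' = 1)
    {a : ℝ} (ha : 0 ≤ a)
    (h1 : ‖(1 - U * Uᵀ) * U'‖ ≤ a) (h2 : ‖(1 - U' * U'ᵀ) * U‖ ≤ a) :
    ‖U * Uᵀ - U' * U'ᵀ‖ ≤ a := by
  set Q := U * Uᵀ with hQdef
  set Q' := U' * U'ᵀ with hQ'def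
  -- matrix norm bounds for the two cross terms
  have hb1 : ‖(1 - Q) * Q'‖ ≤ a := by
    have : (1 - Q) * Q' = ((1 - Q) * U') * U'ᵀ := by
      rw [hQ'def, Matrix.mul_assoc]
    rw [this]
    calc ‖(1 - Q) * U' * U'ᵀ‖ ≤ ‖(1 - Q) * U'‖ * ‖U'ᵀ‖ := Matrix.l2_opNorm_mul _ _
      _ ≤ a * 1 := mul_le_mul h1 (norm_le_one_of_orth' hU') (norm_nonneg _) ha
      _ = a := mul_one a
  have hb2 : ‖Q * (1 - Q')‖ ≤ a := by
    have htr : (Q * (1 - Q'))ᵀ = (1 - Q') * Q := by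
      rw [Matrix.transpose_mul, Matrix.transpose_sub, Matrix.transpose_one,
        proj_symm, proj_symm]
    have hn : ‖Q * (1 - Q')‖ = ‖(1 - Q') * Q‖ := by rw [← htr, transpose_norm]
    have hass : (1 - Q') * Q = ((1 - Q') * U) * Uᵀ := by
      rw [hQdef, Matrix.mul_assoc]
    rw [hn, hass]
    calc ‖((1 - Q') * U) * Uᵀ‖ ≤ ‖(1 - Q') * U‖ * ‖Uᵀ‖ := Matrix.l2_opNorm_mul _ _
      _ ≤ a * 1 := mul_le_mul h2 (norm_le_one_of_orth' hU) (norm_nonneg _) ha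
      _ = a := mul_one a
  apply opNorm_le ha
  intro x
  -- decompose
  have hdec : (Q - Q') *ᵥ x = (Q * (1 - Q')) *ᵥ x - ((1 - Q) * Q') *ᵥ x := by
    rw [← Matrix.sub_mulVec]
    congr 1
    rw [Matrix.mul_sub, Matrix.mul_one, Matrix.sub_mul, Matrix.one_mul]
    abel
  have horth : ((Q * (1 - Q')) *ᵥ x) ⬝ᵥ (((1 - Q) * Q') *ᵥ x) = 0 := by
    have e1 : (Q * (1 - Q')) *ᵥ x = Q *ᵥ ((1 - Q') *ᵥ x) :=
      (Matrix.mulVec_mulVec x Q (1 - Q')).symm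
    have e2 : ((1 - Q) * Q') *ᵥ x = (1 - Q) *ᵥ (Q' *ᵥ x) :=
      (Matrix.mulVec_mulVec x (1 - Q) Q').symm
    rw [e1, e2, dot_symm (proj_symm (U := U)), Matrix.mulVec_mulVec]
    have hz : Q * (1 - Q) = 0 := by
      rw [Matrix.mul_sub, Matrix.mul_one, proj_idem hU, sub_self]
    rw [hz]
    simp
  have hsub : ∀ p q : Fin n → ℝ, p ⬝ᵥ q = 0 → ‖ev (p - q)‖ ^ 2 = ‖ev p‖ ^ 2 + ‖ev q‖ ^ 2 := by
    intro p q hpq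
    have : p - q = p + (-q) := by abel
    rw [this, pyth (by rw [dotProduct_neg, hpq, neg_zero])]
    have h9 : ev (-q) = -(ev q) := rfl
    rw [h9, norm_neg]
  -- first term bound
  have ht1 : ‖ev ((Q * (1 - Q')) *ᵥ x)‖ ≤ a * ‖ev ((1 - Q') *ᵥ x)‖ := by
    have hone : (1 - Q') * (1 - Q') = 1 - Q' := by
      rw [Matrix.mul_sub (1 - Q') 1 Q', Matrix.mul_one, Matrix.sub_mul 1 Q' Q',
        Matrix.one_mul, proj_idem hU']
      abel
    have hidem : (Q * (1 - Q')) * (1 - Q') = Q * (1 - Q') := by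
      rw [Matrix.mul_assoc Q (1 - Q') (1 - Q'), hone]
    have hvec : (Q * (1 - Q')) *ᵥ x = (Q * (1 - Q')) *ᵥ ((1 - Q') *ᵥ x) := by
      rw [Matrix.mulVec_mulVec, hidem]
    rw [hvec]
    calc ‖ev ((Q * (1 - Q')) *ᵥ ((1 - Q') *ᵥ x))‖
        ≤ ‖Q * (1 - Q')‖ * ‖ev ((1 - Q') *ᵥ x)‖ := mulVec_norm_le _ _
      _ ≤ a * ‖ev ((1 - Q') *ᵥ x)‖ := by
          apply mul_le_mul_of_nonneg_right hb2 (norm_ev_nonneg _)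
  have ht2 : ‖ev (((1 - Q) * Q') *ᵥ x)‖ ≤ a * ‖ev (Q' *ᵥ x)‖ := by
    have hidem : ((1 - Q) * Q') * Q' = (1 - Q) * Q' := by
      rw [Matrix.mul_assoc (1 - Q) Q' Q', proj_idem hU']
    have hvec : ((1 - Q) * Q') *ᵥ x = ((1 - Q) * Q') *ᵥ (Q' *ᵥ x) := by
      rw [Matrix.mulVec_mulVec, hidem]
    rw [hvec]
    calc ‖ev (((1 - Q) * Q') *ᵥ (Q' *ᵥ x))‖
        ≤ ‖(1 - Q) * Q'‖ * ‖ev (Q' *ᵥ x)‖ := mulVec_norm_le _ _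
      _ ≤ a * ‖ev (Q' *ᵥ x)‖ := by
          apply mul_le_mul_of_nonneg_right hb1 (norm_ev_nonneg _)
  have hpp := proj_pyth hU' x
  have hfin : ‖ev ((Q - Q') *ᵥ x)‖ ^ 2 ≤ (a * ‖ev x‖) ^ 2 := by
    rw [hdec, hsub _ _ horth]
    have e1 : (a * ‖ev x‖) ^ 2 = (a * ‖ev (Q' *ᵥ x)‖)^2 + (a * ‖ev ((1 - Q') *ᵥ x)‖)^2 := by
      have : a^2 * (‖ev (Q' *ᵥ x)‖^2 + ‖ev ((1 - Q') *ᵥ x)‖^2) = a^2 * ‖ev x‖^2 := by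
        rw [hpp]
      nlinarith [this]
    rw [e1]
    have b1 := ht1
    have b2 := ht2
    nlinarith [norm_ev_nonneg ((Q * (1 - Q')) *ᵥ x), norm_ev_nonneg (((1 - Q) * Q') *ᵥ x),
      mul_nonneg ha (norm_ev_nonneg ((1 - Q') *ᵥ x)), mul_nonneg ha (norm_ev_nonneg (Q' *ᵥ x))]
  nlinarith [norm_ev_nonneg ((Q - Q') *ᵥ x), mul_nonneg ha (norm_ev_nonneg x), hfin]


end projection

lemma mem_castLE_image {m n : ℕ} (h : m ≤ n) (l : Fin n) :
    l ∈ Finset.image (Fin.castLE h) Finset.univ ↔ (l : ℕ) < m := by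
  simp only [Finset.mem_image, Finset.mem_univ, true_and]
  constructor
  · rintro ⟨kk, rfl⟩; exact kk.isLt
  · intro hl; exact ⟨⟨(l : ℕ), hl⟩, by ext; rfl⟩

lemma card_castLE_image {m n : ℕ} (h : m ≤ n) :
    (Finset.image (Fin.castLE h) (Finset.univ : Finset (Fin m))).card = m := by
  rw [Finset.card_image_of_injective _ (Fin.castLE_injective h), Finset.card_univ,
    Fintype.card_fin]

lemma ev_zero_iff {m : ℕ} (v : Fin m → ℝ) : ev v = 0 ↔ v = 0 := by
  constructor
  · intro h
    have := congrArg (WithLp.equiv 2 (Fin m → ℝ)) h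
    simpa [ev] using this
  · rintro rfl; rfl

lemma norm_ev_pos {m : ℕ} {v : Fin m → ℝ} (h : v ≠ 0) : 0 < ‖ev v‖ := by
  rw [norm_pos_iff]
  intro hc
  exact h ((ev_zero_iff v).mp hc)

/-- Weyl-type bound for the trailing eigenvalues: if `rank P ≤ K` then all eigenvalues of `A`
beyond the `K`-th are at most `‖A - P‖` in absolute value. -/
lemma tail_eig_bound {n K : ℕ} {P A : Matrix (Fin n) (Fin n) ℝ}
    {lamA : Fin n → ℝ} {uA : Fin n → Fin n → ℝ} (heigA : EigenData A lamA uA)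
    (hPrank : P.rank ≤ K) {t : ℝ} (hAP : ‖A - P‖ ≤ t) :
    ∀ j : Fin n, K ≤ (j : ℕ) → |lamA j| ≤ t := by
  intro j hj
  have hKn' : K < n := lt_of_le_of_lt hj j.isLt
  set jK : Fin n := ⟨K, hKn'⟩ with hjK
  have hsor : |lamA j| ≤ |lamA jK| := heigA.sorted jK j hj
  suffices h : |lamA jK| ≤ t by exact le_trans hsor h
  set s₁ : Finset (Fin n) := Finset.image (Fin.castLE hKn') Finset.univ with hs₁
  set S₁ := Submodule.span ℝ (uA '' (s₁ : Set (Fin n))) with hS₁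
  set S₂ := LinearMap.ker P.mulVecLin with hS₂
  have hr₁ : Module.finrank ℝ S₁ = K + 1 := by
    rw [hS₁, span_finrank heigA s₁, hs₁, card_castLE_image]
  have hr₂ : n - K ≤ Module.finrank ℝ S₂ := by
    rw [hS₂]
    have h1 := LinearMap.finrank_range_add_finrank_ker P.mulVecLin
    rw [Module.finrank_fintype_fun_eq_card, Fintype.card_fin] at h1
    have h2 : Module.finrank ℝ (LinearMap.range P.mulVecLin) ≤ K := hPrank
    omega
  obtain ⟨v, hv0, hv1, hv2⟩ := exists_ne_zero_mem_inf
    (show n < Module.finrank ℝ S₁ + Module.finrank ℝ S₂ by omega)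
  have hPv : P *ᵥ v = 0 := hv2
  have hlow : |lamA jK| * ‖ev v‖ ≤ ‖ev (A *ᵥ v)‖ := by
    apply quad_ge heigA (abs_nonneg _)
    intro l hld
    have hl1 : l ∈ s₁ := by
      by_contra hl2
      exact hld (dot_eq_zero_of_mem_span heigA s₁ hv1 hl2)
    rw [hs₁, mem_castLE_image] at hl1
    exact heigA.sorted l jK (Nat.lt_succ_iff.mp hl1)
  have hup : ‖ev (A *ᵥ v)‖ ≤ t * ‖ev v‖ := by
    have e : (A - P) *ᵥ v = A *ᵥ v := by rw [Matrix.sub_mulVec, hPv, sub_zero]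
    rw [← e]
    exact le_trans (mulVec_norm_le (A - P) v)
      (mul_le_mul_of_nonneg_right hAP (norm_ev_nonneg v))
  have hvp := norm_ev_pos hv0
  nlinarith

/-- Weyl-type bound for the leading eigenvalues of a perturbation. -/
lemma head_eig_bound {n K : ℕ} (hK : 1 ≤ K) (hKn : K ≤ n) (hKn' : K - 1 < n)
    {P A' : Matrix (Fin n) (Fin n) ℝ}
    {lam u lamA' uA'} (heig : EigenData P lam u) (heigA' : EigenData A' lamA' uA')
    {t : ℝ} (ht : ‖A' - P‖ ≤ t) :
    ∀ kk : Fin n, (kk : ℕ) < K → |lam ⟨K - 1, hKn'⟩| - t ≤ |lamA' kk| := by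
  have hK1n : K - 1 ≤ n := le_of_lt hKn'
  set kK : Fin n := ⟨K - 1, hKn'⟩ with hkK
  intro kk hkk
  have hsor : |lamA' kK| ≤ |lamA' kk| := heigA'.sorted kk kK (show (kk : ℕ) ≤ K - 1 by omega)
  suffices h : |lam kK| - t ≤ |lamA' kK| by exact le_trans h hsor
  set su : Finset (Fin n) := Finset.image (Fin.castLE hKn) Finset.univ with hsu
  set s₂ : Finset (Fin n) := Finset.univ \ (Finset.image (Fin.castLE hK1n) Finset.univ) with hs₂
  set S₁ := Submodule.span ℝ (u '' (su : Set (Fin n))) with hS₁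
  set S₂ := Submodule.span ℝ (uA' '' (s₂ : Set (Fin n))) with hS₂
  have hr₁ : Module.finrank ℝ S₁ = K := by rw [hS₁, span_finrank heig su, hsu, card_castLE_image]
  have hr₂ : Module.finrank ℝ S₂ = n - (K - 1) := by
    rw [hS₂, span_finrank heigA' s₂, hs₂, Finset.card_sdiff_of_subset (Finset.subset_univ _),
      Finset.card_univ, Fintype.card_fin, card_castLE_image]
  obtain ⟨v, hv0, hv1, hv2⟩ := exists_ne_zero_mem_inf
    (show n < Module.finrank ℝ S₁ + Module.finrank ℝ S₂ by omega)
  have hlow : |lam kK| * ‖ev v‖ ≤ ‖ev (P *ᵥ v)‖ := by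
    apply quad_ge heig (abs_nonneg _)
    intro l hld
    have hl1 : l ∈ su := by
      by_contra hl2
      exact hld (dot_eq_zero_of_mem_span heig su hv1 hl2)
    rw [hsu, mem_castLE_image] at hl1
    exact heig.sorted l kK (show (l : ℕ) ≤ K - 1 by omega)
  have hup : ‖ev (A' *ᵥ v)‖ ≤ |lamA' kK| * ‖ev v‖ := by
    apply quad_le heigA' (abs_nonneg _)
    intro l hld
    have hl1 : l ∈ s₂ := by
      by_contra hl2
      exact hld (dot_eq_zero_of_mem_span heigA' s₂ hv2 hl2)
    rw [hs₂, Finset.mem_sdiff, mem_castLE_image] at hl1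
    have : ¬ (l : ℕ) < K - 1 := hl1.2
    exact heigA'.sorted kK l (show K - 1 ≤ (l : ℕ) by omega)
  have htri : ‖ev (P *ᵥ v)‖ ≤ ‖ev (A' *ᵥ v)‖ + t * ‖ev v‖ := by
    have e : P *ᵥ v = A' *ᵥ v + (P - A') *ᵥ v := by
      rw [← Matrix.add_mulVec, add_sub_cancel]
    rw [e, ev_add]
    refine le_trans (norm_add_le _ _) ?_
    have h2 : ‖ev ((P - A') *ᵥ v)‖ ≤ t * ‖ev v‖ := by
      refine le_trans (mulVec_norm_le _ _)
        (mul_le_mul_of_nonneg_right ?_ (norm_ev_nonneg v))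
      rw [show P - A' = -(A' - P) from (neg_sub A' P).symm, norm_neg]
      exact ht
    linarith
  have hvp := norm_ev_pos hv0
  nlinarith


set_option maxHeartbeats 2000000 in
theorem main {n K : ℕ} (hK : 1 ≤ K) (hKn : K ≤ n) (hKn' : K - 1 < n)
    (P : Matrix (Fin n) (Fin n) ℝ) (hPrank : P.rank ≤ K)
    (lam : Fin n → ℝ) (u : Fin n → Fin n → ℝ) (heig : EigenData P lam u)
    (hlamK : lam ⟨K - 1, hKn'⟩ ≠ 0)
    (A A' : Matrix (Fin n) (Fin n) ℝ) (hA : Aᵀ = A) (hA' : A'ᵀ = A')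
    (hAP : ‖A - P‖ ≤ |lam ⟨K - 1, hKn'⟩| / 4)
    (hA'P : ‖A' - P‖ ≤ |lam ⟨K - 1, hKn'⟩| / 4)
    (lamA : Fin n → ℝ) (uA : Fin n → Fin n → ℝ) (heigA : EigenData A lamA uA)
    (lamA' : Fin n → ℝ) (uA' : Fin n → Fin n → ℝ) (heigA' : EigenData A' lamA' uA')
    (Uh Uh' : Matrix (Fin n) (Fin K) ℝ)
    (hUh : ∀ i kk, Uh i kk = uA (Fin.castLE hKn kk) i)
    (hUh' : ∀ i kk, Uh' i kk = uA' (Fin.castLE hKn kk) i) :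
    ‖Uh * Uhᵀ - Uh' * Uh'ᵀ‖ ≤ 2 * ‖(A - A') * Uh'‖ / |lam ⟨K - 1, hKn'⟩| := by
  set kK : Fin n := ⟨K - 1, hKn'⟩ with hkK
  set δ := |lam kK| with hδdef
  have hδ : 0 < δ := abs_pos.mpr hlamK
  set β := ‖(A - A') * Uh'‖ with hβdef
  have hβ0 : 0 ≤ β := norm_nonneg _
  set ε := 2 * β / δ with hεdef
  have hε0 : 0 ≤ ε := by positivity
  -- orthonormal columns
  have hUo : Uhᵀ * Uh = 1 := by
    ext kk l
    simp only [Matrix.mul_apply, Matrix.transpose_apply, Matrix.one_apply, hUh]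
    rw [show (∑ i, uA (Fin.castLE hKn kk) i * uA (Fin.castLE hKn l) i)
      = uA (Fin.castLE hKn kk) ⬝ᵥ uA (Fin.castLE hKn l) from rfl,
      heigA.ortho]
    simp [Fin.castLE_inj]
  have hU'o : Uh'ᵀ * Uh' = 1 := by
    ext kk l
    simp only [Matrix.mul_apply, Matrix.transpose_apply, Matrix.one_apply, hUh']
    rw [show (∑ i, uA' (Fin.castLE hKn kk) i * uA' (Fin.castLE hKn l) i)
      = uA' (Fin.castLE hKn kk) ⬝ᵥ uA' (Fin.castLE hKn l) from rfl,
      heigA'.ortho]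
    simp [Fin.castLE_inj]
  set Q := Uh * Uhᵀ with hQdef
  set Q' := Uh' * Uh'ᵀ with hQ'def
  -- spectral bounds
  have htail : ∀ j : Fin n, K ≤ (j : ℕ) → |lamA j| ≤ δ / 4 :=
    tail_eig_bound heigA hPrank hAP
  have hhead : ∀ kk : Fin n, (kk : ℕ) < K → 3 * δ / 4 ≤ |lamA' kk| := by
    intro kk h
    have := head_eig_bound hK hKn hKn' heig heigA' hA'P kk h
    linarith
  -- Q fixes the leading eigenvectors of A
  have hQu : ∀ j : Fin n, (j : ℕ) < K → Q *ᵥ uA j = uA j := by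
    intro j hj
    have e1 : Q *ᵥ uA j = Uh *ᵥ (Uhᵀ *ᵥ uA j) := (Matrix.mulVec_mulVec (uA j) Uh Uhᵀ).symm
    have e2 : Uhᵀ *ᵥ uA j = fun kk => if kk = (⟨(j : ℕ), hj⟩ : Fin K) then 1 else 0 := by
      funext kk
      show ∑ i, Uhᵀ kk i * uA j i = _
      simp only [Matrix.transpose_apply, hUh]
      rw [show (∑ i, uA (Fin.castLE hKn kk) i * uA j i)
        = uA (Fin.castLE hKn kk) ⬝ᵥ uA j from rfl, heigA.ortho]
      congr 1
      simp only [eq_iff_iff]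
      constructor
      · intro h
        have hv := congrArg Fin.val h
        exact Fin.ext (by simpa using hv)
      · intro h
        have hv := congrArg Fin.val h
        exact Fin.ext (by simpa using hv)
    rw [e1, e2]
    funext i
    show ∑ kk, Uh i kk * _ = _
    rw [Finset.sum_congr rfl (fun kk _ => mul_ite_zero ..),
      Finset.sum_ite_eq' Finset.univ (⟨(j : ℕ), hj⟩ : Fin K) (fun kk => Uh i kk * 1)]
    simp only [Finset.mem_univ, if_true, mul_one, hUh]
    have : Fin.castLE hKn (⟨(j : ℕ), hj⟩ : Fin K) = j := by ext; rfl
    rw [this]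
  -- ‖A (1 - Q)‖ ≤ δ/4
  have honemQ : ‖(1 - Q : Matrix (Fin n) (Fin n) ℝ)‖ ≤ 1 := norm_onemproj_le hUo
  have hAQn : ‖A * (1 - Q)‖ ≤ δ / 4 := by
    apply opNorm_le (by positivity)
    intro x
    have e : (A * (1 - Q)) *ᵥ x = A *ᵥ ((1 - Q) *ᵥ x) :=
      (Matrix.mulVec_mulVec x A (1 - Q)).symm
    rw [e]
    have h1 : ‖ev (A *ᵥ ((1 - Q) *ᵥ x))‖ ≤ (δ / 4) * ‖ev ((1 - Q) *ᵥ x)‖ := by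
      apply quad_le heigA (by positivity)
      intro j hj
      by_cases hjK : (j : ℕ) < K
      · exfalso
        apply hj
        have hsym : (1 - Q)ᵀ = 1 - Q := by
          rw [Matrix.transpose_sub, Matrix.transpose_one, proj_symm]
        have hz : (1 - Q) *ᵥ uA j = 0 := by
          rw [Matrix.sub_mulVec, Matrix.one_mulVec, hQu j hjK, sub_self]
        rw [← dot_symm hsym (uA j) x, hz]
        simp
      · exact htail j (le_of_not_gt hjK)
    refine le_trans h1 ?_
    exact mul_le_mul_of_nonneg_left (onemproj_mulVec_le hUo x) (by positivity)
  -- eigen equation for the leading columns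
  set d : Fin K → ℝ := fun kk => lamA' (Fin.castLE hKn kk) with hddef
  have hd : ∀ kk, 3 * δ / 4 ≤ |d kk| := fun kk => hhead _ (by exact kk.isLt)
  have hdne : ∀ kk, d kk ≠ 0 := by
    intro kk h0
    have := hd kk
    rw [h0, abs_zero] at this
    linarith
  set Λ := Matrix.diagonal d with hΛdef
  set N := Matrix.diagonal (fun kk => (d kk)⁻¹) with hNdef
  have hΛN : Λ * N = 1 := by
    rw [hΛdef, hNdef, Matrix.diagonal_mul_diagonal]
    rw [show (fun kk => d kk * (d kk)⁻¹) = fun _ => (1 : ℝ) from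
      funext fun kk => mul_inv_cancel₀ (hdne kk)]
    exact Matrix.diagonal_one
  have hNn : ‖N‖ ≤ 4 / (3 * δ) := by
    apply norm_diagonal_le (by positivity)
    intro kk
    rw [abs_inv]
    rw [show (4 : ℝ) / (3 * δ) = (3 * δ / 4)⁻¹ by field_simp]
    exact inv_anti₀ (by positivity) (hd kk)
  have hcolA' : A' * Uh' = Uh' * Λ := by
    ext i kk
    have e1 : (A' * Uh') i kk = (A' *ᵥ uA' (Fin.castLE hKn kk)) i := by
      simp only [Matrix.mul_apply, Matrix.mulVec, dotProduct, hUh']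
    rw [e1, heigA'.eig]
    show _ = ∑ l, Uh' i l * Λ l kk
    simp only [hΛdef, Matrix.diagonal_apply]
    rw [Finset.sum_congr rfl (fun l _ => mul_ite_zero ..),
      Finset.sum_ite_eq' Finset.univ kk (fun l => Uh' i l * d l)]
    simp [hUh', hddef, mul_comm]
  have hcolA : A * Uh = Uh * Matrix.diagonal (fun kk => lamA (Fin.castLE hKn kk)) := by
    ext i kk
    have e1 : (A * Uh) i kk = (A *ᵥ uA (Fin.castLE hKn kk)) i := by
      simp only [Matrix.mul_apply, Matrix.mulVec, dotProduct, hUh]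
    rw [e1, heigA.eig]
    show _ = ∑ l, Uh i l * Matrix.diagonal (fun kk => lamA (Fin.castLE hKn kk)) l kk
    simp only [Matrix.diagonal_apply]
    rw [Finset.sum_congr rfl (fun l _ => mul_ite_zero ..),
      Finset.sum_ite_eq' Finset.univ kk (fun l => Uh i l * lamA (Fin.castLE hKn l))]
    simp [hUh, mul_comm]
  -- A commutes with Q
  have hAQc : A * Q = Q * A := by
    have h1 : A * Q = Uh * Matrix.diagonal (fun kk => lamA (Fin.castLE hKn kk)) * Uhᵀ := by
      rw [hQdef, ← Matrix.mul_assoc, hcolA]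
    have hsymm : (A * Q)ᵀ = A * Q := by
      rw [h1, Matrix.transpose_mul, Matrix.transpose_mul, Matrix.diagonal_transpose,
        Matrix.transpose_transpose, Matrix.mul_assoc]
    calc A * Q = (A * Q)ᵀ := hsymm.symm
      _ = Qᵀ * Aᵀ := Matrix.transpose_mul _ _
      _ = Q * A := by rw [proj_symm, hA]
  set X := (1 - Q) * Uh' with hXdef
  have hXnorm : ‖X‖ ≤ ε := by
    have honemc : (1 - Q) * A = A * (1 - Q) := by
      rw [Matrix.sub_mul, Matrix.mul_sub, Matrix.one_mul, Matrix.mul_one, hAQc]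
    have honemidem : (1 - Q) * (1 - Q) = 1 - Q := by
      rw [Matrix.mul_sub (1 - Q) 1 Q, Matrix.mul_one, Matrix.sub_mul 1 Q Q,
        Matrix.one_mul, proj_idem hUo]
      abel
    have heq : X * Λ = A * X - (1 - Q) * ((A - A') * Uh') := by
      have e1 : X * Λ = (1 - Q) * (A' * Uh') := by
        rw [hXdef, Matrix.mul_assoc, hcolA']
      have e2 : A' * Uh' = A * Uh' - (A - A') * Uh' := by
        rw [Matrix.sub_mul, sub_sub_cancel]
      have e3 : (1 - Q) * (A * Uh') = A * X := by
        rw [hXdef, ← Matrix.mul_assoc, honemc, Matrix.mul_assoc]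
      rw [e1, e2, Matrix.mul_sub, e3]
    have hXid : X = (A * (1 - Q)) * X * N - ((1 - Q) * ((A - A') * Uh')) * N := by
      have e4 : A * X = (A * (1 - Q)) * X := by
        rw [hXdef, ← Matrix.mul_assoc A (1 - Q) Uh',
          ← Matrix.mul_assoc (A * (1 - Q)) (1 - Q) Uh',
          Matrix.mul_assoc A (1 - Q) (1 - Q), honemidem]
      calc X = X * (Λ * N) := by rw [hΛN, Matrix.mul_one]
        _ = (X * Λ) * N := (Matrix.mul_assoc X Λ N).symm
        _ = (A * X - (1 - Q) * ((A - A') * Uh')) * N := by rw [heq]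
        _ = (A * X) * N - ((1 - Q) * ((A - A') * Uh')) * N := Matrix.sub_mul _ _ _
        _ = (A * (1 - Q)) * X * N - ((1 - Q) * ((A - A') * Uh')) * N := by rw [e4]
    have hb1 : ‖(A * (1 - Q)) * X * N‖ ≤ (δ / 4) * ‖X‖ * (4 / (3 * δ)) := by
      calc ‖(A * (1 - Q)) * X * N‖ ≤ ‖(A * (1 - Q)) * X‖ * ‖N‖ := Matrix.l2_opNorm_mul _ _
        _ ≤ (‖A * (1 - Q)‖ * ‖X‖) * ‖N‖ := by
            apply mul_le_mul_of_nonneg_right (Matrix.l2_opNorm_mul _ _) (norm_nonneg _)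
        _ ≤ (δ / 4 * ‖X‖) * (4 / (3 * δ)) := by
            apply mul_le_mul
            · exact mul_le_mul_of_nonneg_right hAQn (norm_nonneg _)
            · exact hNn
            · exact norm_nonneg _
            · positivity
    have hb2 : ‖((1 - Q) * ((A - A') * Uh')) * N‖ ≤ β * (4 / (3 * δ)) := by
      calc ‖((1 - Q) * ((A - A') * Uh')) * N‖
          ≤ ‖(1 - Q) * ((A - A') * Uh')‖ * ‖N‖ := Matrix.l2_opNorm_mul _ _
        _ ≤ (‖(1 - Q : Matrix (Fin n) (Fin n) ℝ)‖ * β) * ‖N‖ := by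
            apply mul_le_mul_of_nonneg_right (Matrix.l2_opNorm_mul _ _) (norm_nonneg _)
        _ ≤ (1 * β) * (4 / (3 * δ)) := by
            apply mul_le_mul
            · exact mul_le_mul_of_nonneg_right honemQ hβ0
            · exact hNn
            · exact norm_nonneg _
            · positivity
        _ = β * (4 / (3 * δ)) := by ring
    have hchain : ‖X‖ ≤ (δ / 4) * ‖X‖ * (4 / (3 * δ)) + β * (4 / (3 * δ)) := by
      calc ‖X‖ = ‖(A * (1 - Q)) * X * N - ((1 - Q) * ((A - A') * Uh')) * N‖ := by rw [← hXid]
        _ ≤ ‖(A * (1 - Q)) * X * N‖ + ‖((1 - Q) * ((A - A') * Uh')) * N‖ := norm_sub_le _ _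
        _ ≤ (δ / 4) * ‖X‖ * (4 / (3 * δ)) + β * (4 / (3 * δ)) := add_le_add hb1 hb2
    have e5 : (δ / 4) * ‖X‖ * (4 / (3 * δ)) = ‖X‖ / 3 := by field_simp
    have e6 : β * (4 / (3 * δ)) = (2 / 3) * ε := by rw [hεdef]; field_simp; ring
    rw [e5, e6] at hchain
    linarith
  by_cases hcase : ε < 1
  · -- transfer the lower bound through the transpose
    set M := Uhᵀ * Uh' with hMdef
    have hMT : Mᵀ = Uh'ᵀ * Uh := by
      rw [hMdef, Matrix.transpose_mul, Matrix.transpose_transpose]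
    have hsplit : ∀ z : Fin K → ℝ,
        ‖ev (M *ᵥ z)‖ ^ 2 + ‖ev (X *ᵥ z)‖ ^ 2 = ‖ev z‖ ^ 2 := by
      intro z
      have h1 := proj_pyth hUo (Uh' *ᵥ z)
      rw [proj_mulVec_norm hUo] at h1
      rw [Matrix.mulVec_mulVec z Uhᵀ Uh', Matrix.mulVec_mulVec z (1 - Q) Uh',
        isometry_of_orth hU'o z] at h1
      exact h1
    have hXz : ∀ z : Fin K → ℝ, ‖ev (X *ᵥ z)‖ ≤ ε * ‖ev z‖ := fun z =>
      le_trans (mulVec_norm_le X z) (mul_le_mul_of_nonneg_right hXnorm (norm_ev_nonneg z))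
    set c := Real.sqrt (1 - ε ^ 2) with hcdef
    have hc2 : c ^ 2 = 1 - ε ^ 2 := Real.sq_sqrt (by nlinarith)
    have hcpos : 0 < c := Real.sqrt_pos.mpr (by nlinarith)
    have hMlow : ∀ z : Fin K → ℝ, c * ‖ev z‖ ≤ ‖ev (M *ᵥ z)‖ := by
      intro z
      have h3 := hsplit z
      have h2 := hXz z
      nlinarith [norm_ev_nonneg (M *ᵥ z), norm_ev_nonneg z, norm_ev_nonneg (X *ᵥ z),
        mul_nonneg hε0 (norm_ev_nonneg z), mul_nonneg hcpos.le (norm_ev_nonneg z)]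
    have hinj : Function.Injective M.mulVecLin := by
      intro z₁ z₂ hz
      have h4 : M.mulVecLin (z₁ - z₂) = 0 := by
        rw [map_sub, hz, sub_self]
      rw [Matrix.mulVecLin_apply] at h4
      have h5 := hMlow (z₁ - z₂)
      rw [h4] at h5
      have h6 : ‖ev (z₁ - z₂)‖ ≤ 0 := by
        have : ‖(ev (0 : Fin K → ℝ))‖ = 0 := norm_zero
        nlinarith
      have h7 : z₁ - z₂ = 0 := by
        by_contra hne
        exact absurd h6 (not_le.mpr (norm_ev_pos hne))
      exact sub_eq_zero.mp h7
    have hsurj := LinearMap.injective_iff_surjective.mp hinj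
    have hMTlow : ∀ z : Fin K → ℝ, c * ‖ev z‖ ≤ ‖ev (Mᵀ *ᵥ z)‖ := by
      intro z
      obtain ⟨y, hy⟩ := hsurj z
      rw [Matrix.mulVecLin_apply] at hy
      by_cases hz : ‖ev z‖ = 0
      · rw [hz, mul_zero]
        exact norm_ev_nonneg _
      have hzpos : 0 < ‖ev z‖ := lt_of_le_of_ne (norm_ev_nonneg z) (Ne.symm hz)
      have hCS : z ⬝ᵥ z ≤ ‖ev (Mᵀ *ᵥ z)‖ * ‖ev y‖ := by
        have e7 : z ⬝ᵥ (M *ᵥ y) = (Mᵀ *ᵥ z) ⬝ᵥ y := by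
          rw [Matrix.dotProduct_mulVec, ← Matrix.mulVec_transpose]
        calc z ⬝ᵥ z = z ⬝ᵥ (M *ᵥ y) := by rw [hy]
          _ = (Mᵀ *ᵥ z) ⬝ᵥ y := e7
          _ = inner ℝ (ev (Mᵀ *ᵥ z)) (ev y) := (inner_ev _ _).symm
          _ ≤ ‖ev (Mᵀ *ᵥ z)‖ * ‖ev y‖ := real_inner_le_norm _ _
      have hyb : c * ‖ev y‖ ≤ ‖ev z‖ := by
        rw [← hy]
        exact hMlow y
      have hzz : z ⬝ᵥ z = ‖ev z‖ ^ 2 := (norm_ev_sq z).symm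
      rw [hzz] at hCS
      nlinarith [norm_ev_nonneg (Mᵀ *ᵥ z), norm_ev_nonneg y]
    have hX' : ‖(1 - Q') * Uh‖ ≤ ε := by
      apply opNorm_le hε0
      intro z
      have h1 := proj_pyth hU'o (Uh *ᵥ z)
      rw [proj_mulVec_norm hU'o] at h1
      rw [Matrix.mulVec_mulVec z Uh'ᵀ Uh, Matrix.mulVec_mulVec z (1 - Q') Uh,
        isometry_of_orth hUo z, ← hMT] at h1
      have h2 := hMTlow z
      nlinarith [norm_ev_nonneg (((1 - Q') * Uh) *ᵥ z), norm_ev_nonneg z,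
        mul_nonneg hε0 (norm_ev_nonneg z), norm_ev_nonneg (Mᵀ *ᵥ z),
        mul_nonneg hcpos.le (norm_ev_nonneg z)]
    exact combine hUo hU'o hε0 hXnorm hX'
  · push_neg at hcase
    have hU'n : ‖Uh'‖ ≤ 1 := norm_le_one_of_orth hU'o
    have hUn : ‖Uh‖ ≤ 1 := norm_le_one_of_orth hUo
    have honemQ' : ‖(1 - Q' : Matrix (Fin n) (Fin n) ℝ)‖ ≤ 1 := norm_onemproj_le hU'o
    have h1 : ‖(1 - Q) * Uh'‖ ≤ 1 := by
      calc ‖(1 - Q) * Uh'‖ ≤ ‖(1 - Q : Matrix (Fin n) (Fin n) ℝ)‖ * ‖Uh'‖ :=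
            Matrix.l2_opNorm_mul _ _
        _ ≤ 1 * 1 := mul_le_mul honemQ hU'n (norm_nonneg _) zero_le_one
        _ = 1 := mul_one 1
    have h2 : ‖(1 - Q') * Uh‖ ≤ 1 := by
      calc ‖(1 - Q') * Uh‖ ≤ ‖(1 - Q' : Matrix (Fin n) (Fin n) ℝ)‖ * ‖Uh‖ :=
            Matrix.l2_opNorm_mul _ _
        _ ≤ 1 * 1 := mul_le_mul honemQ' hUn (norm_nonneg _) zero_le_one
        _ = 1 := mul_one 1
    exact le_trans (combine hUo hU'o zero_le_one h1 h2) hcase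

end DKhelp
end

theorem stmt_11 {n K : ℕ} (hK : 1 ≤ K) (hKn : K ≤ n)
    (P : Matrix (Fin n) (Fin n) ℝ) (hPsymm : P.IsSymm) (hPrank : P.rank ≤ K)
    (lam : Fin n → ℝ) (u : Fin n → Fin n → ℝ) (heig : EigenData P lam u)
    (hlamK : lam ⟨K - 1, by omega⟩ ≠ 0)
    (A A' : Matrix (Fin n) (Fin n) ℝ) (hA : A.IsSymm) (hA' : A'.IsSymm)
    (hAP : specNorm (A - P) ≤ |lam ⟨K - 1, by omega⟩| / 4)
    (hA'P : specNorm (A' - P) ≤ |lam ⟨K - 1, by omega⟩| / 4)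
    (lamA : Fin n → ℝ) (uA : Fin n → Fin n → ℝ) (heigA : EigenData A lamA uA)
    (lamA' : Fin n → ℝ) (uA' : Fin n → Fin n → ℝ) (heigA' : EigenData A' lamA' uA')
    (Uh Uh' : Matrix (Fin n) (Fin K) ℝ)
    (hUh : Uh = leadingCols hKn uA) (hUh' : Uh' = leadingCols hKn uA') :
    specNorm (Uh * Uhᵀ - Uh' * Uh'ᵀ) ≤
      2 * specNorm ((A - A') * Uh') / |lam ⟨K - 1, by omega⟩| := by
  have hKn' : K - 1 < n := by omega
  exact DKhelp.main hK hKn hKn' P hPrank lam u heig hlamK A A' hA hA' hAP hA'P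
    lamA uA heigA lamA' uA' heigA' Uh Uh'
    (fun i kk => by rw [hUh]; rfl) (fun i kk => by rw [hUh']; rfl)

end
end
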